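/- arXiv:1803.02899 — 7 statements merged into one kernel-verified Lean document; each statement's English description precedes it below -/
import Mathlib

section
/- A function α in the Möbius algebra M(C) of a finite category C satisfies e_C α e_C = α if and only if α is invariant under isomorphisms, i.e., α(x,y) = α(x',y') whenever x ≅ x' and y ≅ y' in C. -/
open CategoryTheory
open scoped Classical

universe u v

/-- Convolution product on the Möbius algebra of rational-valued functions
on pairs of objects of a finite category. -/
noncomputable def conv (C : Type u) [Category.{v} C] [Fintype C]
    (α β : C → C → ℚ) : C → C → ℚ :=
  fun x y => ∑ z : C, α x z * β z y

/-- The size of the isomorphism class of an object. -/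
noncomputable def isoCard (C : Type u) [Category.{v} C] [Fintype C] (x : C) : ℚ :=
  ((Finset.univ.filter fun z : C => Nonempty (x ≅ z)).card : ℚ)

/-- The idempotent `e_C` : `e_C(x,y) = 1/|[x]|` if `x ≅ y`, and `0` otherwise. -/
noncomputable def eFun (C : Type u) [Category.{v} C] [Fintype C] : C → C → ℚ :=
  fun x y => if Nonempty (x ≅ y) then 1 / isoCard C x else 0

/-- The zeta function of a finite category: `ζ_C(x,y) = |C(x,y)|`. -/
noncomputable def zeta (C : Type u) [Category.{v} C] [Fintype C]
    [∀ x y : C, Fintype (x ⟶ y)] : C → C → ℚ :=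
  fun x y => (Fintype.card (x ⟶ y) : ℚ)

/-- The Kronecker delta, the multiplicative identity of the Möbius algebra. -/
noncomputable def delta (C : Type u) [Category.{v} C] [Fintype C] : C → C → ℚ :=
  fun x y => if x = y then 1 else 0

lemma isoCard_congr {C : Type u} [Category.{v} C] [Fintype C] {x x' : C}
    (h : Nonempty (x ≅ x')) : isoCard C x = isoCard C x' := by
  unfold isoCard
  congr 2
  apply Finset.filter_congr
  intro z _
  exact ⟨fun ⟨i⟩ => ⟨h.some.symm.trans i⟩, fun ⟨i⟩ => ⟨h.some.trans i⟩⟩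

lemma isoCard_pos {C : Type u} [Category.{v} C] [Fintype C] (x : C) :
    0 < isoCard C x := by
  unfold isoCard
  have : x ∈ Finset.univ.filter fun z : C => Nonempty (x ≅ z) := by
    simpa using ⟨Iso.refl x⟩
  exact_mod_cast Finset.card_pos.mpr ⟨x, this⟩

lemma sum_indicator {C : Type u} [Category.{v} C] [Fintype C] (x : C) :
    (∑ z : C, if Nonempty (x ≅ z) then (1:ℚ) else 0) = isoCard C x := by
  rw [Finset.sum_boole]; rfl

lemma eFun_congr_left {C : Type u} [Category.{v} C] [Fintype C] {x x' : C}
    (h : Nonempty (x ≅ x')) (z : C) : eFun C x z = eFun C x' z := by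
  unfold eFun
  have hiff : Nonempty (x ≅ z) ↔ Nonempty (x' ≅ z) :=
    ⟨fun ⟨i⟩ => ⟨h.some.symm.trans i⟩, fun ⟨i⟩ => ⟨h.some.trans i⟩⟩
  rw [isoCard_congr h]
  by_cases hc : Nonempty (x ≅ z)
  · rw [if_pos hc, if_pos (hiff.mp hc)]
  · rw [if_neg hc, if_neg (fun hh => hc (hiff.mpr hh))]

lemma eFun_congr_right {C : Type u} [Category.{v} C] [Fintype C] {y y' : C}
    (h : Nonempty (y ≅ y')) (w : C) : eFun C w y = eFun C w y' := by
  unfold eFun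
  have hiff : Nonempty (w ≅ y) ↔ Nonempty (w ≅ y') :=
    ⟨fun ⟨i⟩ => ⟨i.trans h.some⟩, fun ⟨i⟩ => ⟨i.trans h.some.symm⟩⟩
  by_cases hc : Nonempty (w ≅ y)
  · rw [if_pos hc, if_pos (hiff.mp hc)]
  · rw [if_neg hc, if_neg (fun hh => hc (hiff.mpr hh))]


/-- `α ∈ M(C)` satisfies `e_C α e_C = α` iff `α` is invariant under
isomorphisms. -/
theorem corner_mem_iff_iso_invariant (C : Type u) [Category.{v} C] [Fintype C]
    [∀ x y : C, Fintype (x ⟶ y)] (α : C → C → ℚ) :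
    conv C (eFun C) (conv C α (eFun C)) = α ↔
      ∀ x x' y y' : C, Nonempty (x ≅ x') → Nonempty (y ≅ y') → α x y = α x' y' := by
  constructor
  · intro h x x' y y' hx hy
    rw [← h]
    show conv C (eFun C) (conv C α (eFun C)) x y = conv C (eFun C) (conv C α (eFun C)) x' y'
    unfold conv
    apply Finset.sum_congr rfl
    intro z _
    rw [eFun_congr_left hx z]
    congr 1
    apply Finset.sum_congr rfl
    intro w _
    rw [eFun_congr_right hy w]
  · intro h
    funext x y
    unfold conv
    have key : ∀ z w : C, eFun C x z * (α z w * eFun C w y)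
        = ((if Nonempty (x ≅ z) then (1:ℚ) else 0) * (if Nonempty (y ≅ w) then (1:ℚ) else 0))
          * (α x y / (isoCard C x * isoCard C y)) := by
      intro z w
      unfold eFun
      by_cases h1 : Nonempty (x ≅ z)
      · by_cases h2 : Nonempty (w ≅ y)
        · have h2' : Nonempty (y ≅ w) := ⟨h2.some.symm⟩
          rw [if_pos h1, if_pos h2, if_pos h1, if_pos h2']
          rw [← h x z y w h1 h2', isoCard_congr h2]
          have hx0 : isoCard C x ≠ 0 := ne_of_gt (isoCard_pos x)
          have hy0 : isoCard C y ≠ 0 := ne_of_gt (isoCard_pos y)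
          field_simp
        · have h2' : ¬ Nonempty (y ≅ w) := fun ⟨i⟩ => h2 ⟨i.symm⟩
          rw [if_neg h2, if_neg h2']; ring
      · rw [if_neg h1, if_neg h1]; ring
    simp only [Finset.mul_sum]
    simp only [key]
    simp only [← Finset.sum_mul, ← Finset.mul_sum]
    rw [sum_indicator, sum_indicator]
    have hx0 : isoCard C x ≠ 0 := ne_of_gt (isoCard_pos x)
    have hy0 : isoCard C y ≠ 0 := ne_of_gt (isoCard_pos y)
    field_simp
end

section
/- For a finite category C, the following are equivalent: (1) ζ_C has an inverse in the corner algebra e_C M(C) e_C (C has skeletal Möbius inversion); (2) there exists β in M(C) with ζ_C β = e_C; (3) there exists α in M(C) with α ζ_C = e_C; (4) there exist α, β in M(C) with α ζ_C β = e_C. -/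
open CategoryTheory
open scoped Classical

universe u v

set_option linter.unusedSectionVars false

section Aux

variable (C : Type u) [Category.{v} C] [Fintype C] [∀ x y : C, Fintype (x ⟶ y)]

lemma conv_eq_mul (α β : C → C → ℚ) :
    conv C α β = (Matrix.of α * Matrix.of β : Matrix C C ℚ) := by
  funext x y; rw [Matrix.mul_apply]; rfl

lemma iso_comm (x y : C) : Nonempty (x ≅ y) ↔ Nonempty (y ≅ x) :=
  ⟨fun ⟨i⟩ => ⟨i.symm⟩, fun ⟨i⟩ => ⟨i.symm⟩⟩

lemma isoCard_pos_s3 (x : C) : 0 < isoCard C x := by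
  unfold isoCard
  have : x ∈ Finset.univ.filter fun z : C => Nonempty (x ≅ z) := by
    simp [Nonempty.intro (Iso.refl x)]
  exact_mod_cast Finset.card_pos.mpr ⟨x, this⟩

lemma isoCard_ne (x : C) : isoCard C x ≠ 0 := (isoCard_pos_s3 C x).ne'

lemma isoCard_congr_s3 {x z : C} (h : Nonempty (x ≅ z)) : isoCard C x = isoCard C z := by
  obtain ⟨i⟩ := h
  unfold isoCard
  congr 2
  apply Finset.filter_congr
  intro w _
  exact ⟨fun ⟨j⟩ => ⟨i.symm.trans j⟩, fun ⟨j⟩ => ⟨i.trans j⟩⟩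

lemma zeta_congr_right {x z y : C} (i : z ≅ y) : zeta C x z = zeta C x y := by
  unfold zeta
  rw [Fintype.card_congr (Iso.homCongr (Iso.refl x) i)]

lemma zeta_congr_left {x z y : C} (i : x ≅ z) : zeta C z y = zeta C x y := by
  unfold zeta
  rw [Fintype.card_congr (Iso.homCongr i.symm (Iso.refl y))]

lemma sum_ite_card (P : C → Prop) (K : ℚ) :
    ∑ z : C, (if P z then K else 0) = ((Finset.univ.filter P).card : ℚ) * K := by
  rw [← Finset.sum_filter, Finset.sum_const, nsmul_eq_mul]

lemma e_mul_e :
    (Matrix.of (eFun C) * Matrix.of (eFun C) : Matrix C C ℚ) = Matrix.of (eFun C) := by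
  funext x y
  rw [Matrix.mul_apply]
  show ∑ z : C, eFun C x z * eFun C z y = eFun C x y
  unfold eFun
  by_cases h : Nonempty (x ≅ y)
  · obtain ⟨j⟩ := h
    have key : ∀ z : C,
        (if Nonempty (x ≅ z) then 1 / isoCard C x else 0) *
          (if Nonempty (z ≅ y) then 1 / isoCard C z else 0) =
        if Nonempty (x ≅ z) then 1 / isoCard C x * (1 / isoCard C x) else 0 := by
      intro z
      by_cases hz : Nonempty (x ≅ z)
      · obtain ⟨i⟩ := hz
        rw [if_pos ⟨i⟩, if_pos ⟨i.symm.trans j⟩, ← isoCard_congr_s3 C ⟨i⟩, if_pos ⟨i⟩]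
      · simp [hz]
    rw [Finset.sum_congr rfl fun z _ => key z, sum_ite_card, if_pos ⟨j⟩]
    show isoCard C x * _ = _
    have := isoCard_ne C x
    field_simp
  · rw [if_neg h]
    apply Finset.sum_eq_zero
    intro z _
    by_cases h1 : Nonempty (x ≅ z)
    · by_cases h2 : Nonempty (z ≅ y)
      · exact absurd ⟨h1.some.trans h2.some⟩ h
      · simp [h2]
    · simp [h1]

lemma e_mul_zeta :
    (Matrix.of (eFun C) * Matrix.of (zeta C) : Matrix C C ℚ) = Matrix.of (zeta C) := by
  funext x y
  rw [Matrix.mul_apply]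
  show ∑ z : C, eFun C x z * zeta C z y = zeta C x y
  have key : ∀ z : C, eFun C x z * zeta C z y =
      if Nonempty (x ≅ z) then 1 / isoCard C x * zeta C x y else 0 := by
    intro z
    unfold eFun
    by_cases hz : Nonempty (x ≅ z)
    · rw [if_pos hz, if_pos hz, zeta_congr_left C hz.some]
    · simp [hz]
  rw [Finset.sum_congr rfl fun z _ => key z, sum_ite_card]
  show isoCard C x * _ = _
  have := isoCard_ne C x
  field_simp

lemma zeta_mul_e :
    (Matrix.of (zeta C) * Matrix.of (eFun C) : Matrix C C ℚ) = Matrix.of (zeta C) := by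
  funext x y
  rw [Matrix.mul_apply]
  show ∑ z : C, zeta C x z * eFun C z y = zeta C x y
  have key : ∀ z : C, zeta C x z * eFun C z y =
      if Nonempty (y ≅ z) then zeta C x y * (1 / isoCard C y) else 0 := by
    intro z
    unfold eFun
    by_cases hz : Nonempty (z ≅ y)
    · rw [if_pos hz, if_pos ((iso_comm C z y).mp hz), zeta_congr_right C hz.some,
        isoCard_congr_s3 C hz]
    · rw [if_neg hz, if_neg (fun h => hz ((iso_comm C y z).mp h)), mul_zero]
  rw [Finset.sum_congr rfl fun z _ => key z, sum_ite_card]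
  show isoCard C y * _ = _
  have := isoCard_ne C y
  field_simp

/-- One-sided inverses in the corner algebra are two-sided. -/
lemma corner_comm {n : Type*} [Fintype n] [DecidableEq n] (E A B : Matrix n n ℚ)
    (hEE : E * E = E) (hEA : E * A = A) (hAE : A * E = A)
    (hEB : E * B = B) (hBE : B * E = B)
    (h : A * B = E) : B * A = E := by
  have h1 : (A + (1 - E)) * (B + (1 - E)) = 1 := by
    have expand : (A + (1 - E)) * (B + (1 - E)) =
        A * B + (A - A * E) + ((B - E * B) + (1 - E - (E - E * E))) := by
      noncomm_ring
    rw [expand, h, hAE, hEB, hEE]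
    abel
  have h2 := mul_eq_one_comm.mp h1
  have expand2 : (B + (1 - E)) * (A + (1 - E)) =
      B * A + (B - B * E) + ((A - E * A) + (1 - E - (E - E * E))) := by
    noncomm_ring
  rw [expand2, hBE, hEA, hEE] at h2
  have e1 : B * A + (1 - E) = 1 := by
    calc B * A + (1 - E) = B * A + (B - B) + (A - A + (1 - E - (E - E))) := by abel
      _ = 1 := h2
  have h3 := eq_sub_of_add_eq e1
  rwa [sub_sub_cancel] at h3

end Aux

/-- the following are equivalent for a finite category `C`:
(1) `ζ_C` is invertible in the corner algebra `e_C M(C) e_C` (skeletal Möbius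
inversion); (2) `∃ β, ζ_C β = e_C`; (3) `∃ α, α ζ_C = e_C`;
(4) `∃ α β, α ζ_C β = e_C`. -/
theorem skeletal_mobius_tfae (C : Type u) [Category.{v} C] [Fintype C]
    [∀ x y : C, Fintype (x ⟶ y)] :
    [ (∃ ν : C → C → ℚ, conv C (eFun C) (conv C ν (eFun C)) = ν ∧
        conv C (zeta C) ν = eFun C ∧ conv C ν (zeta C) = eFun C),
      (∃ β : C → C → ℚ, conv C (zeta C) β = eFun C),
      (∃ α : C → C → ℚ, conv C α (zeta C) = eFun C),
      (∃ α β : C → C → ℚ, conv C α (conv C (zeta C) β) = eFun C) ].TFAE := by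
  set E : Matrix C C ℚ := Matrix.of (eFun C) with hE
  set Z : Matrix C C ℚ := Matrix.of (zeta C) with hZ
  have hEE : E * E = E := e_mul_e C
  have hEZ : E * Z = Z := e_mul_zeta C
  have hZE : Z * E = Z := zeta_mul_e C
  tfae_have 1 → 2
  | ⟨ν, _, h2, _⟩ => ⟨ν, h2⟩
  tfae_have 1 → 3
  | ⟨ν, _, _, h3⟩ => ⟨ν, h3⟩
  tfae_have 2 → 4 := by
    rintro ⟨β, h⟩
    refine ⟨eFun C, β, ?_⟩
    rw [h, conv_eq_mul]
    exact hEE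
  tfae_have 3 → 4 := by
    rintro ⟨α, h⟩
    refine ⟨α, eFun C, ?_⟩
    have : conv C (zeta C) (eFun C) = zeta C := by
      rw [conv_eq_mul]; exact hZE
    rw [this]; exact h
  tfae_have 4 → 1 := by
    rintro ⟨α, β, h⟩
    have h' : (Matrix.of α) * (Z * Matrix.of β) = E := by
      rw [conv_eq_mul, conv_eq_mul] at h
      exact h
    set a : Matrix C C ℚ := E * Matrix.of α * E with ha
    set b : Matrix C C ℚ := E * Matrix.of β * E with hb
    have hEa : E * a = a := by rw [ha, ← mul_assoc, ← mul_assoc, hEE]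
    have haE : a * E = a := by rw [ha, mul_assoc, mul_assoc, hEE, ← mul_assoc]
    have hEb : E * b = b := by rw [hb, ← mul_assoc, ← mul_assoc, hEE]
    have hbE : b * E = b := by rw [hb, mul_assoc, mul_assoc, hEE, ← mul_assoc]
    have hab : a * (Z * b) = E := by
      calc a * (Z * b) = E * (Matrix.of α * ((E * (Z * E)) * (Matrix.of β * E))) := by
            rw [ha, hb]; simp only [mul_assoc]
        _ = E * (Matrix.of α * ((E * Z) * (Matrix.of β * E))) := by rw [hZE]
        _ = E * (Matrix.of α * (Z * (Matrix.of β * E))) := by rw [hEZ]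
        _ = E * ((Matrix.of α * (Z * Matrix.of β)) * E) := by simp only [mul_assoc]
        _ = E := by rw [h', hEE, hEE]
    -- Zb := Z * b lies in the corner
    have hEZb : E * (Z * b) = Z * b := by rw [← mul_assoc, hEZ]
    have hZbE : (Z * b) * E = Z * b := by rw [mul_assoc, hbE]
    -- aZ := a * Z lies in the corner
    have hEaZ : E * (a * Z) = a * Z := by rw [← mul_assoc, hEa]
    have haZE : (a * Z) * E = a * Z := by rw [mul_assoc, hZE]
    have h1 : (Z * b) * a = E :=
      corner_comm E a (Z * b) hEE hEa haE hEZb hZbE hab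
    have h2 : b * (a * Z) = E := by
      have hab' : (a * Z) * b = E := by rw [mul_assoc]; exact hab
      exact corner_comm E (a * Z) b hEE hEaZ haZE hEb hbE hab'
    refine ⟨Matrix.of.symm (b * a : Matrix C C ℚ), ?_, ?_, ?_⟩
    · rw [conv_eq_mul, conv_eq_mul]
      show E * (b * a * E) = b * a
      rw [mul_assoc b a E, haE, ← mul_assoc, hEb]
    · rw [conv_eq_mul]
      show Z * (b * a) = eFun C
      rw [← mul_assoc]
      exact h1
    · rw [conv_eq_mul]
      show (b * a) * Z = eFun C
      rw [mul_assoc]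
      exact h2
  tfae_finish
end

section
/- A finite skeletal EI-category has Möbius inversion: its zeta function is invertible in the convolution algebra M(C). In particular, the preorder on objects given by x ≤ y iff C(x,y) ≠ ∅ is a partial order, and ζ_C is upper triangular with nonzero diagonal with respect to any linear extension. -/
open CategoryTheory
open scoped Classical

universe u v

/-- a finite skeletal EI-category has Möbius inversion: its zeta
function is invertible in the convolution algebra `M(C)`.  In particular the
preorder `x ≤ y ↔ C(x,y) ≠ ∅` is a partial order (it is antisymmetric). -/
theorem skeletal_ei_has_mobius (C : Type u) [Category.{v} C] [Fintype C]
    [∀ x y : C, Fintype (x ⟶ y)]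
    (hskel : ∀ x y : C, (x ≅ y) → x = y)
    (hEI : ∀ (x : C) (f : x ⟶ x), IsIso f) :
    (∃ μ : C → C → ℚ, conv C (zeta C) μ = delta C ∧ conv C μ (zeta C) = delta C) ∧
    (∀ x y : C, Nonempty (x ⟶ y) → Nonempty (y ⟶ x) → x = y) := by
  classical
  have hanti : ∀ x y : C, Nonempty (x ⟶ y) → Nonempty (y ⟶ x) → x = y := by
    rintro x y ⟨f⟩ ⟨g⟩
    have h1 : IsIso (f ≫ g) := hEI x _
    have h2 : IsIso (g ≫ f) := hEI y _
    set h : y ⟶ x := g ≫ CategoryTheory.inv (f ≫ g) with hh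
    set k : y ⟶ x := CategoryTheory.inv (g ≫ f) ≫ g with hk
    have hfh : f ≫ h = 𝟙 x := by
      rw [hh, ← Category.assoc, IsIso.hom_inv_id]
    have hkf : k ≫ f = 𝟙 y := by
      rw [hk, Category.assoc, IsIso.inv_hom_id]
    have hhf : h ≫ f = 𝟙 y := by
      calc h ≫ f = (k ≫ f) ≫ (h ≫ f) := by rw [hkf, Category.id_comp]
        _ = k ≫ (f ≫ h) ≫ f := by simp only [Category.assoc]
        _ = k ≫ f := by rw [hfh, Category.id_comp]
        _ = 𝟙 y := hkf
    exact hskel x y ⟨f, h, hfh, hhf⟩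
  refine ⟨?_, hanti⟩
  -- set up a partial order on C
  letI P : PartialOrder C :=
    { le := fun x y => Nonempty (x ⟶ y)
      le_refl := fun x => ⟨𝟙 x⟩
      le_trans := fun x y z hf hg => ⟨hf.some ≫ hg.some⟩
      le_antisymm := fun x y hf hg => hanti x y hf hg }
  letI : LinearOrder (LinearExtension C) := inferInstance
  set b : C → LinearExtension C := fun x => toLinearExtension x with hb
  have hbmono : ∀ {x y : C}, x ≤ y → b x ≤ b y := fun hxy =>
    toLinearExtension.monotone hxy
  have hbinj : Function.Injective b := fun x y hxy => hxy
  set M : Matrix C C ℚ := Matrix.of (zeta C) with hM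
  have hBT : M.BlockTriangular b := by
    intro i j hij
    by_contra hne
    have : Nonempty (i ⟶ j) := by
      by_contra hempty
      have : Fintype.card (i ⟶ j) = 0 := by
        simp [Fintype.card_eq_zero_iff, not_nonempty_iff.mp hempty]
      exact hne (by simp [hM, zeta, this])
    have : b i ≤ b j := hbmono this
    exact absurd (lt_of_le_of_lt this hij) (lt_irrefl _)
  have hdiag : ∀ x : C, M x x ≠ 0 := by
    intro x
    have : 0 < Fintype.card (x ⟶ x) := Fintype.card_pos_iff.mpr ⟨𝟙 x⟩
    simp only [hM, Matrix.of_apply, zeta]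
    exact_mod_cast this.ne'
  have hdet : M.det ≠ 0 := by
    rw [hBT.det]
    apply Finset.prod_ne_zero_iff.mpr
    intro a ha
    obtain ⟨x, _, hx⟩ := Finset.mem_image.mp ha
    letI : Unique {i // b i = a} :=
      { default := ⟨x, hx⟩
        uniq := fun ⟨z, hz⟩ => Subtype.ext (hbinj (hz.trans hx.symm)) }
    rw [Matrix.det_unique]
    have hrfl : M.toSquareBlock b a default default = M x x := rfl
    rw [hrfl]
    exact hdiag x
  haveI : Invertible M := M.invertibleOfIsUnitDet (isUnit_iff_ne_zero.mpr hdet)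
  refine ⟨fun x y => M⁻¹ x y, ?_, ?_⟩
  · funext x y
    have := Matrix.mul_nonsing_inv M (isUnit_iff_ne_zero.mpr hdet)
    have h1 : (M * M⁻¹) x y = (1 : Matrix C C ℚ) x y := by rw [this]
    simpa [conv, delta, Matrix.mul_apply, Matrix.one_apply, hM, Matrix.of_apply] using h1
  · funext x y
    have := Matrix.nonsing_inv_mul M (isUnit_iff_ne_zero.mpr hdet)
    have h1 : (M⁻¹ * M) x y = (1 : Matrix C C ℚ) x y := by rw [this]
    simpa [conv, delta, Matrix.mul_apply, Matrix.one_apply, hM, Matrix.of_apply] using h1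
end

section
/- Let C be a finite category, k : Obj(C) → Q a weighting on C, and F : C → Cat a functor such that the Grothendieck construction ∫F and each F(x) have Euler characteristics. Then χ(∫F) = Σ_{x ∈ Obj(C)} k(x) · χ(F(x)). -/
open CategoryTheory
open scoped Classical

universe u v w

/-- Zeta function of a category, via `Nat.card` of hom-sets. -/
noncomputable def zetaN (D : Type u) [Category.{v} D] : D → D → ℚ :=
  fun x y => (Nat.card (x ⟶ y) : ℚ)

/-- A weighting on a category: `Σ_y |D(x,y)| k(y) = 1` for all objects `x`. -/
def WeightingN (D : Type u) [Category.{v} D] (k : D → ℚ) : Prop :=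
  ∀ x : D, ∑ᶠ y : D, zetaN D x y * k y = 1

/-- A coweighting on a category: `Σ_x k(x) |D(x,y)| = 1` for all objects `y`. -/
def CoweightingN (D : Type u) [Category.{v} D] (k : D → ℚ) : Prop :=
  ∀ y : D, ∑ᶠ x : D, k x * zetaN D x y = 1

/-- Any weighting and any coweighting on a finite category have the same total sum. -/
lemma total_weight_eq {D : Type u} [Category.{v} D] [Finite D]
    [∀ x y : D, Finite (x ⟶ y)]
    {w c : D → ℚ} (hw : WeightingN D w) (hc : CoweightingN D c) :
    ∑ᶠ x : D, c x = ∑ᶠ x : D, w x := by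
  have : Fintype D := Fintype.ofFinite D
  unfold WeightingN at hw
  unfold CoweightingN at hc
  simp only [finsum_eq_sum_of_fintype] at hw hc ⊢
  calc ∑ x, c x = ∑ x, c x * (∑ y, zetaN D x y * w y) := by simp [hw]
    _ = ∑ x, ∑ y, c x * zetaN D x y * w y := by
        simp [Finset.mul_sum, mul_assoc]
    _ = ∑ y, (∑ x, c x * zetaN D x y) * w y := by
        rw [Finset.sum_comm]; simp [Finset.sum_mul]
    _ = ∑ y, w y := by simp [hc]

/-- Objects of the Grothendieck construction as a sigma type. -/
def grothObjEquiv {C : Type u} [Category.{v} C] (F : C ⥤ Cat.{v, u}) :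
    Grothendieck F ≃ Σ x : C, F.obj x where
  toFun p := ⟨p.base, p.fiber⟩
  invFun s := ⟨s.1, s.2⟩
  left_inv p := rfl
  right_inv s := rfl

/-- Morphisms of the Grothendieck construction as a sigma type. -/
def grothHomEquiv {C : Type u} [Category.{v} C] (F : C ⥤ Cat.{v, u})
    (p q : Grothendieck F) :
    (p ⟶ q) ≃ Σ α : p.base ⟶ q.base, ((F.map α).toFunctor.obj p.fiber ⟶ q.fiber) where
  toFun f := ⟨f.base, f.fiber⟩
  invFun s := ⟨s.1, s.2⟩
  left_inv f := rfl
  right_inv s := rfl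

/-- Leinster: if `k` is a weighting on a finite category `C` and
`F : C ⥤ Cat` is a functor such that the Grothendieck construction `∫F` and
each `F(x)` have Euler characteristics (i.e. admit weightings and coweightings,
whose total sums are the Euler characteristics), then
`χ(∫F) = Σ_x k(x)·χ(F(x))`. -/
theorem euler_grothendieck (C : Type u) [Category.{v} C] [Finite C]
    [∀ x y : C, Finite (x ⟶ y)]
    (F : C ⥤ Cat.{v, u})
    (hObj : ∀ x : C, Finite (F.obj x))
    (hHom : ∀ (x : C) (a b : F.obj x), Finite (a ⟶ b))
    (k : C → ℚ) (hk : WeightingN C k)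
    (kG k'G : Grothendieck F → ℚ)
    (hkG : WeightingN (Grothendieck F) kG)
    (hk'G : CoweightingN (Grothendieck F) k'G)
    (kf k'f : ∀ x : C, F.obj x → ℚ)
    (hkf : ∀ x : C, WeightingN (F.obj x) (kf x))
    (hk'f : ∀ x : C, CoweightingN (F.obj x) (k'f x)) :
    ∑ᶠ p : Grothendieck F, kG p = ∑ᶠ x : C, k x * ∑ᶠ a : F.obj x, kf x a := by
  have : Fintype C := Fintype.ofFinite C
  haveI := hObj
  haveI : ∀ x : C, Fintype (F.obj x) := fun x => Fintype.ofFinite _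
  haveI : Finite (Grothendieck F) := Finite.of_equiv _ (grothObjEquiv F).symm
  haveI : Fintype (Grothendieck F) := Fintype.ofFinite _
  haveI : ∀ x y : C, Fintype (x ⟶ y) := fun x y => Fintype.ofFinite _
  haveI : ∀ (x : C) (a b : F.obj x), Fintype (a ⟶ b) := fun _ _ _ => Fintype.ofFinite _
  haveI homFin : ∀ p q : Grothendieck F, Finite (p ⟶ q) := by
    intro p q
    haveI : ∀ α : p.base ⟶ q.base, Finite ((F.map α).toFunctor.obj p.fiber ⟶ q.fiber) :=
      fun α => hHom q.base _ _
    exact Finite.of_equiv _ (grothHomEquiv F p q).symm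
  -- the hom-set of the Grothendieck category decomposes as a sum
  have hzeta : ∀ p q : Grothendieck F,
      zetaN (Grothendieck F) p q =
        ∑ α : p.base ⟶ q.base,
          (Nat.card ((F.map α).toFunctor.obj p.fiber ⟶ q.fiber) : ℚ) := by
    intro p q
    have := Nat.card_congr (grothHomEquiv F p q)
    rw [zetaN, this]
    simp only [Nat.card_eq_fintype_card, Fintype.card_sigma]
    push_cast
    rfl
  -- the function `l p = k p.base * kf p.base p.fiber` is a weighting on `∫F`
  set l : Grothendieck F → ℚ := fun p => k p.base * kf p.base p.fiber with hl
  have hlw : WeightingN (Grothendieck F) l := by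
    intro p
    rw [finsum_eq_sum_of_fintype]
    rw [← Equiv.sum_comp (grothObjEquiv F).symm
      (fun q => zetaN (Grothendieck F) p q * l q)]
    have key : ∀ q : Grothendieck F,
        zetaN (Grothendieck F) p q * l q =
          ∑ α : p.base ⟶ q.base,
            k q.base * (zetaN (F.obj q.base) ((F.map α).toFunctor.obj p.fiber) q.fiber
              * kf q.base q.fiber) := by
      intro q
      rw [hzeta, Finset.sum_mul]
      refine Finset.sum_congr rfl fun α _ => ?_
      simp only [hl, zetaN]
      ring
    calc
      (∑ s : Σ x : C, F.obj x,
          zetaN (Grothendieck F) p ((grothObjEquiv F).symm s)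
            * l ((grothObjEquiv F).symm s))
        = ∑ x : C, ∑ a : F.obj x, ∑ α : p.base ⟶ x,
            k x * (zetaN (F.obj x) ((F.map α).toFunctor.obj p.fiber) a * kf x a) := by
          rw [← Finset.univ_sigma_univ, Finset.sum_sigma]
          exact Finset.sum_congr rfl fun x _ =>
            Finset.sum_congr rfl fun a _ => key ⟨x, a⟩
      _ = ∑ x : C, ∑ α : p.base ⟶ x,
            k x * ∑ a : F.obj x,
              zetaN (F.obj x) ((F.map α).toFunctor.obj p.fiber) a * kf x a := by
          refine Finset.sum_congr rfl fun x _ => ?_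
          rw [Finset.sum_comm]
          simp [Finset.mul_sum]
      _ = ∑ x : C, ∑ α : p.base ⟶ x, k x := by
          refine Finset.sum_congr rfl fun x _ => ?_
          refine Finset.sum_congr rfl fun α _ => ?_
          have := hkf x ((F.map α).toFunctor.obj p.fiber)
          rw [finsum_eq_sum_of_fintype] at this
          rw [this, mul_one]
      _ = ∑ x : C, zetaN C p.base x * k x := by
          refine Finset.sum_congr rfl fun x _ => ?_
          simp [zetaN, Nat.card_eq_fintype_card, Finset.sum_const, nsmul_eq_mul]
      _ = 1 := by
          have := hk p.base
          rw [finsum_eq_sum_of_fintype] at this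
          exact this
  -- both `kG` and `l` are weightings; the coweighting `k'G` gives a common total
  have h1 : ∑ᶠ p : Grothendieck F, kG p = ∑ᶠ p : Grothendieck F, l p := by
    rw [← total_weight_eq hkG hk'G, total_weight_eq hlw hk'G]
  rw [h1]
  simp only [finsum_eq_sum_of_fintype]
  rw [← Equiv.sum_comp (grothObjEquiv F).symm l,
    ← Finset.univ_sigma_univ, Finset.sum_sigma]
  exact Finset.sum_congr rfl fun x _ => by
    simp [hl, grothObjEquiv, Finset.mul_sum]
end

section
/- Let G be a finite group, C a finite category with skeletal Möbius inversion, and F : C → (finite G-sets) a functor. Then the G-category ∫F has series Lefschetz invariant Λ_Σ(∫F) = Σ_{x ∈ Obj(C)} k_C(x)·[F(x)] in the rational Burnside ring Ω(G) = Q ⊗ Ω_Z(G), where k_C is the skeletal weighting on C and [F(x)] is the class of the G-set F(x). -/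
open CategoryTheory
open scoped Classical

universe u v
set_option linter.unusedSectionVars false

universe w

/-- A non-degenerate `n`-simplex of the nerve of the Grothendieck construction
`∫F` of a functor `F : C → (G-sets)`: a chain of `n` composable non-identity
morphisms of `∫F`. -/
structure FChain {C : Type u} [Category.{v} C] (F : C → Type w)
    (Fmap : ∀ {x y : C}, (x ⟶ y) → F x → F y) (n : ℕ) where
  obj : Fin (n + 1) → C
  pt : ∀ i : Fin (n + 1), F (obj i)
  hom : ∀ i : Fin n, obj i.castSucc ⟶ obj i.succ
  compat : ∀ i : Fin n, Fmap (hom i) (pt i.castSucc) = pt i.succ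
  nondeg : ∀ i : Fin n, ¬ ∃ h : obj i.castSucc = obj i.succ, hom i = eqToHom h

namespace SLG

variable {C : Type u} [Category.{v} C] [Fintype C] [∀ x y : C, Fintype (x ⟶ y)]


/-- the `e` idempotent as a matrix -/
noncomputable def eM (C : Type u) [Category.{v} C] [Fintype C] : Matrix C C ℚ :=
  Matrix.of (eFun C)

noncomputable def zM (C : Type u) [Category.{v} C] [Fintype C]
    [∀ x y : C, Fintype (x ⟶ y)] : Matrix C C ℚ := Matrix.of (zeta C)

lemma conv_eq_mul (α β : C → C → ℚ) :
    conv C α β = (Matrix.of α * Matrix.of β : Matrix C C ℚ) := by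
  funext x y
  rw [Matrix.mul_apply]
  rfl

lemma isoCard_eq_of_iso {x z : C} (h : Nonempty (x ≅ z)) : isoCard C x = isoCard C z := by
  unfold isoCard
  congr 2
  ext w
  simp only [Finset.mem_filter, Finset.mem_univ, true_and]
  constructor
  · rintro ⟨i⟩; exact h.elim fun j => ⟨j.symm.trans i⟩
  · rintro ⟨i⟩; exact h.elim fun j => ⟨j.trans i⟩

lemma isoCard_pos (x : C) : 0 < isoCard C x := by
  unfold isoCard
  have : x ∈ Finset.univ.filter fun z : C => Nonempty (x ≅ z) := by
    simp only [Finset.mem_filter, Finset.mem_univ, true_and]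
    exact ⟨Iso.refl x⟩
  exact_mod_cast Finset.card_pos.2 ⟨x, this⟩

lemma eM_mul_eM : eM C * eM C = eM C := by
  ext x y
  simp only [Matrix.mul_apply, eM, Matrix.of_apply, eFun]
  by_cases h : Nonempty (x ≅ y)
  · rw [if_pos h]
    have : ∀ z : C, (if Nonempty (x ≅ z) then 1 / isoCard C x else 0) *
        (if Nonempty (z ≅ y) then 1 / isoCard C z else 0)
        = if Nonempty (x ≅ z) then 1 / isoCard C x * (1 / isoCard C x) else 0 := by
      intro z
      by_cases hz : Nonempty (x ≅ z)
      · have hz' : Nonempty (z ≅ y) := hz.elim fun i => h.elim fun j => ⟨i.symm.trans j⟩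
        rw [if_pos hz, if_pos hz, if_pos hz', isoCard_eq_of_iso hz]
      · simp [hz]
    rw [Finset.sum_congr rfl fun z _ => this z, ← Finset.sum_filter, Finset.sum_const,
      nsmul_eq_mul]
    have hc : isoCard C x ≠ 0 := ne_of_gt (isoCard_pos x)
    have : ((Finset.univ.filter fun z : C => Nonempty (x ≅ z)).card : ℚ) = isoCard C x := rfl
    rw [this]
    field_simp
  · rw [if_neg h]
    apply Finset.sum_eq_zero
    intro z _
    by_cases hz : Nonempty (x ≅ z)
    · have : ¬ Nonempty (z ≅ y) := fun hz' => h (hz.elim fun i => hz'.elim fun j => ⟨i.trans j⟩)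
      simp [this]
    · simp [hz]

lemma card_hom_left {x x' y : C} (h : x ≅ x') :
    Fintype.card (x ⟶ y) = Fintype.card (x' ⟶ y) :=
  Fintype.card_congr ⟨fun φ => h.inv ≫ φ, fun ψ => h.hom ≫ ψ,
    fun φ => by simp, fun ψ => by simp⟩

lemma card_hom_right {x y y' : C} (h : y ≅ y') :
    Fintype.card (x ⟶ y) = Fintype.card (x ⟶ y') :=
  Fintype.card_congr ⟨fun φ => φ ≫ h.hom, fun ψ => ψ ≫ h.inv,
    fun φ => by simp, fun ψ => by simp⟩

lemma eM_mul_zM : eM C * zM C = zM C := by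
  ext x y
  simp only [Matrix.mul_apply, eM, zM, Matrix.of_apply, eFun, zeta]
  have : ∀ z : C, (if Nonempty (x ≅ z) then 1 / isoCard C x else 0) * (Fintype.card (z ⟶ y) : ℚ)
      = if Nonempty (x ≅ z) then 1 / isoCard C x * (Fintype.card (x ⟶ y) : ℚ) else 0 := by
    intro z
    by_cases hz : Nonempty (x ≅ z)
    · rw [if_pos hz, if_pos hz, card_hom_left (Classical.choice hz)]
    · simp [hz]
  rw [Finset.sum_congr rfl fun z _ => this z, ← Finset.sum_filter, Finset.sum_const,
    nsmul_eq_mul]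
  have hc : isoCard C x ≠ 0 := ne_of_gt (isoCard_pos x)
  have h2 : ((Finset.univ.filter fun z : C => Nonempty (x ≅ z)).card : ℚ) = isoCard C x := rfl
  rw [h2]
  field_simp

lemma zM_mul_eM : zM C * eM C = zM C := by
  ext x y
  simp only [Matrix.mul_apply, eM, zM, Matrix.of_apply, eFun, zeta]
  have : ∀ z : C, (Fintype.card (x ⟶ z) : ℚ) * (if Nonempty (z ≅ y) then 1 / isoCard C z else 0)
      = if Nonempty (y ≅ z) then (Fintype.card (x ⟶ y) : ℚ) * (1 / isoCard C y) else 0 := by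
    intro z
    by_cases hz : Nonempty (y ≅ z)
    · have hz' : Nonempty (z ≅ y) := hz.elim fun i => ⟨i.symm⟩
      rw [if_pos hz', if_pos hz, card_hom_right (Classical.choice hz'),
        isoCard_eq_of_iso hz']
    · have hz' : ¬ Nonempty (z ≅ y) := fun h => hz (h.elim fun i => ⟨i.symm⟩)
      simp [hz, hz']
  rw [Finset.sum_congr rfl fun z _ => this z, ← Finset.sum_filter, Finset.sum_const,
    nsmul_eq_mul]
  have hc : isoCard C y ≠ 0 := ne_of_gt (isoCard_pos y)
  have h2 : ((Finset.univ.filter fun z : C => Nonempty (y ≅ z)).card : ℚ) = isoCard C y := rfl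
  rw [h2]
  field_simp

lemma eM_row_sum (x : C) : ∑ y : C, eM C x y = 1 := by
  simp only [eM, Matrix.of_apply, eFun]
  rw [← Finset.sum_filter, Finset.sum_const, nsmul_eq_mul]
  have hc : isoCard C x ≠ 0 := ne_of_gt (isoCard_pos x)
  have h2 : ((Finset.univ.filter fun z : C => Nonempty (x ≅ z)).card : ℚ) = isoCard C x := rfl
  rw [h2]
  field_simp

lemma pathSum (Z : Matrix C C ℚ) : ∀ (n : ℕ) (v : C → ℚ),
    ∑ f : Fin (n + 1) → C, v (f 0) * ∏ i : Fin n, Z (f i.castSucc) (f i.succ)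
      = ∑ x : C, v x * (Z ^ n).mulVec (fun _ => 1) x := by
  intro n
  induction n with
  | zero =>
    intro v
    rw [← (Equiv.funUnique (Fin 1) C).symm.sum_comp]
    simp [pow_zero, Matrix.one_mulVec]
  | succ n ih =>
    intro v
    rw [← ((Fin.consEquiv (fun _ : Fin (n + 2) => C)).sum_comp
      (fun f => v (f 0) * ∏ i : Fin (n + 1), Z (f i.castSucc) (f i.succ)))]
    rw [Fintype.sum_prod_type]
    have key : ∀ (x : C) (g : Fin (n + 1) → C),
        v ((Fin.consEquiv (fun _ : Fin (n + 2) => C)) (x, g) 0) *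
          ∏ i : Fin (n + 1), Z ((Fin.consEquiv (fun _ : Fin (n + 2) => C)) (x, g) i.castSucc)
            ((Fin.consEquiv (fun _ : Fin (n + 2) => C)) (x, g) i.succ)
        = v x * ((fun y => Z x y) (g 0) * ∏ i : Fin n, Z (g i.castSucc) (g i.succ)) := by
      intro x g
      simp only [Fin.consEquiv_apply, Fin.prod_univ_succ, Fin.castSucc_zero, Fin.cons_zero,
        Fin.cons_succ, ← Fin.succ_castSucc]
    calc ∑ x : C, ∑ g : Fin (n + 1) → C, _ = ∑ x : C, v x *
        ∑ g : Fin (n + 1) → C, (fun y => Z x y) (g 0) * ∏ i : Fin n, Z (g i.castSucc) (g i.succ) := by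
          refine Finset.sum_congr rfl fun x _ => ?_
          rw [Finset.mul_sum]
          exact Finset.sum_congr rfl fun g _ => key x g
      _ = ∑ x : C, v x * (Z ^ (n + 1)).mulVec (fun _ => 1) x := by
          refine Finset.sum_congr rfl fun x _ => ?_
          rw [ih (fun y => Z x y)]
          congr 1
          have : ∑ y : C, Z x y * (Z ^ n).mulVec (fun _ => 1) y
              = Z.mulVec ((Z ^ n).mulVec (fun _ => 1)) x := by
            simp [Matrix.mulVec, dotProduct]
          rw [this, Matrix.mulVec_mulVec, ← pow_succ']


variable {G : Type*} [Group G] {C : Type u} [Category.{v} C]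
  (F : C → Type w) [∀ x : C, MulAction G (F x)]
  (Fmap : ∀ {x y : C}, (x ⟶ y) → F x → F y)

noncomputable def pts {n : ℕ} (obj : Fin (n + 1) → C)
    (hom : ∀ i : Fin n, obj i.castSucc ⟶ obj i.succ) (a : F (obj 0)) :
    ∀ i : Fin (n + 1), F (obj i) :=
  fun i => Fin.induction a (fun j ih => Fmap (hom j) ih) i

lemma pts_zero {n : ℕ} (obj : Fin (n + 1) → C)
    (hom : ∀ i : Fin n, obj i.castSucc ⟶ obj i.succ) (a : F (obj 0)) :
    pts F Fmap obj hom a 0 = a := rfl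

lemma pts_succ {n : ℕ} (obj : Fin (n + 1) → C)
    (hom : ∀ i : Fin n, obj i.castSucc ⟶ obj i.succ) (a : F (obj 0)) (i : Fin n) :
    pts F Fmap obj hom a i.succ = Fmap (hom i) (pts F Fmap obj hom a i.castSucc) :=
  Fin.induction_succ _ _ i

noncomputable def chainEquiv (H : Subgroup G) (n : ℕ)
    (hFequiv : ∀ {x y : C} (φ : x ⟶ y) (g : G) (a : F x), Fmap φ (g • a) = g • Fmap φ a) :
    { c : FChain F (fun φ => Fmap φ) n //
        ∀ (i : Fin (n + 1)), ∀ h ∈ H, h • c.pt i = c.pt i } ≃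
    Σ obj : Fin (n + 1) → C,
      (∀ i : Fin n, { φ : obj i.castSucc ⟶ obj i.succ //
          ¬ ∃ h : obj i.castSucc = obj i.succ, φ = eqToHom h }) ×
      { a : F (obj 0) // ∀ h ∈ H, h • a = a } where
  toFun c := ⟨c.1.obj, fun i => ⟨c.1.hom i, c.1.nondeg i⟩, ⟨c.1.pt 0, c.2 0⟩⟩
  invFun d :=
    ⟨⟨d.1, pts F Fmap d.1 (fun i => (d.2.1 i).1) d.2.2.1, fun i => (d.2.1 i).1,
        fun i => (pts_succ F Fmap d.1 (fun i => (d.2.1 i).1) d.2.2.1 i).symm,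
        fun i => (d.2.1 i).2⟩, by
      intro i
      induction i using Fin.induction with
      | zero => exact d.2.2.2
      | succ j ih =>
        intro h hH
        show h • pts F Fmap d.1 (fun i => (d.2.1 i).1) d.2.2.1 j.succ = _
        rw [pts_succ, ← hFequiv, ih h hH]
        exact (pts_succ F Fmap d.1 (fun i => (d.2.1 i).1) d.2.2.1 j).symm⟩
  left_inv := by
    rintro ⟨c, hc⟩
    apply Subtype.ext
    obtain ⟨obj, pt, hom, compat, nondeg⟩ := c
    have hpt : pts F Fmap obj hom (pt 0) = pt := by
      funext i
      induction i using Fin.induction with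
      | zero => rfl
      | succ j ih => rw [pts_succ, ih]; exact compat j
    show FChain.mk obj (pts F Fmap obj hom (pt 0)) hom _ _ = FChain.mk obj pt hom _ _
    simp only [hpt]
  right_inv := by
    rintro ⟨obj, hom, a⟩
    have h2 : (fun i => (⟨(hom i).1, (hom i).2⟩ :
        { φ : obj i.castSucc ⟶ obj i.succ //
          ¬ ∃ h : obj i.castSucc = obj i.succ, φ = eqToHom h })) = hom := by
      funext i; exact Subtype.ext rfl
    refine Sigma.ext rfl (heq_of_eq ?_)
    refine Prod.ext h2 (Subtype.ext ?_)
    rfl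

lemma card_nondeg [∀ x y : C, Fintype (x ⟶ y)] (x y : C) :
    ((Fintype.card { φ : x ⟶ y // ¬ ∃ h : x = y, φ = eqToHom h }) : ℚ)
      = (Fintype.card (x ⟶ y) : ℚ) - (if x = y then 1 else 0) := by
  by_cases h : x = y
  · subst h
    rw [if_pos rfl]
    have h1 : ∀ φ : x ⟶ x, (∃ h : x = x, φ = eqToHom h) ↔ φ = 𝟙 x := by
      intro φ
      constructor
      · rintro ⟨h, rfl⟩; simp
      · rintro rfl; exact ⟨rfl, by simp⟩
    have h2 : Fintype.card { φ : x ⟶ x // ¬ ∃ h : x = x, φ = eqToHom h }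
        = Fintype.card { φ : x ⟶ x // ¬ φ = 𝟙 x } := by
      apply Fintype.card_congr
      exact Equiv.subtypeEquivRight fun φ => by rw [h1]
    rw [h2, Fintype.card_subtype_compl, Fintype.card_subtype_eq]
    have h3 : 1 ≤ Fintype.card (x ⟶ x) := Fintype.card_pos_iff.2 ⟨𝟙 x⟩
    push_cast [Nat.cast_sub h3]
    ring
  · rw [if_neg h]
    have h2 : Fintype.card { φ : x ⟶ y // ¬ ∃ h' : x = y, φ = eqToHom h' }
        = Fintype.card (x ⟶ y) := by
      apply Fintype.card_congr
      exact Equiv.subtypeUnivEquiv fun φ => by rintro ⟨h', -⟩; exact h h'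
    rw [h2]; ring

lemma chainCard [Fintype C] [∀ x y : C, Fintype (x ⟶ y)] [∀ x : C, Finite (F x)]
    (H : Subgroup G) (n : ℕ)
    (hFequiv : ∀ {x y : C} (φ : x ⟶ y) (g : G) (a : F x), Fmap φ (g • a) = g • Fmap φ a) :
    (Nat.card { c : FChain F (fun φ => Fmap φ) n //
        ∀ (i : Fin (n + 1)), ∀ h ∈ H, h • c.pt i = c.pt i } : ℚ)
      = ∑ f : Fin (n + 1) → C,
        (∏ i : Fin n, ((Fintype.card (f i.castSucc ⟶ f i.succ) : ℚ) -
            if f i.castSucc = f i.succ then 1 else 0)) *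
        (Nat.card { a : F (f 0) // ∀ h ∈ H, h • a = a } : ℚ) := by
  letI : ∀ x : C, Fintype (F x) := fun x => Fintype.ofFinite _
  rw [Nat.card_congr (chainEquiv F Fmap H n hFequiv), Nat.card_eq_fintype_card,
    Fintype.card_sigma]
  push_cast
  refine Finset.sum_congr rfl fun f _ => ?_
  rw [Fintype.card_prod, Fintype.card_pi]
  push_cast
  congr 1
  · exact Finset.prod_congr rfl fun i _ => card_nondeg _ _
  · rw [Nat.card_eq_fintype_card]


end SLG

section Main

open SLG Polynomial

/-- let `C` be a finite category with skeletal Möbius inversion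
(with `ν` the inverse of `ζ_C` in the corner algebra, so that the skeletal
weighting is `k_C = ν·𝟙`), and `F : C → (finite G-sets)` a functor.  Then the
`G`-category `∫F` has series Lefschetz invariant
`Λ_Σ(∫F) = Σ_x k_C(x)·[F(x)] ∈ Ω(G)`: expressed through the mark homomorphisms
(which detect equality in the rational Burnside ring `Ω(G)`), for every
subgroup `H ≤ G` the generating power series of `H`-fixed non-degenerate
simplices of the nerve of `∫F` is a rational function `p/q` regular at
`t = −1`, whose value there is `Σ_x k_C(x)·|F(x)^H|`. -/
theorem series_lefschetz_grothendieck {G : Type*} [Group G] [Fintype G]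
    {C : Type u} [Category.{v} C] [Fintype C] [∀ x y : C, Fintype (x ⟶ y)]
    (F : C → Type w) [∀ x : C, MulAction G (F x)] [∀ x : C, Finite (F x)]
    (Fmap : ∀ {x y : C}, (x ⟶ y) → F x → F y)
    (hFid : ∀ (x : C) (a : F x), Fmap (𝟙 x) a = a)
    (hFcomp : ∀ {x y z : C} (φ : x ⟶ y) (ψ : y ⟶ z) (a : F x),
      Fmap (φ ≫ ψ) a = Fmap ψ (Fmap φ a))
    (hFequiv : ∀ {x y : C} (φ : x ⟶ y) (g : G) (a : F x),
      Fmap φ (g • a) = g • Fmap φ a)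
    (ν : C → C → ℚ)
    (hcorner : conv C (eFun C) (conv C ν (eFun C)) = ν)
    (hl : conv C (zeta C) ν = eFun C) (hr : conv C ν (zeta C) = eFun C) :
    ∀ H : Subgroup G, ∃ p q : Polynomial ℚ,
      q.eval (-1) ≠ 0 ∧
      PowerSeries.mk (fun n =>
          (Nat.card { c : FChain F (fun φ => Fmap φ) n //
            ∀ (i : Fin (n + 1)), ∀ h ∈ H, h • c.pt i = c.pt i } : ℚ)) *
        (q : PowerSeries ℚ) = (p : PowerSeries ℚ) ∧
      p.eval (-1) = q.eval (-1) *
        ∑ x : C, (∑ y : C, ν x y) *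
          (Nat.card { a : F x // ∀ h ∈ H, h • a = a } : ℚ) := by
  intro H
  classical
  -- matrix versions of the hypotheses
  set νM : Matrix C C ℚ := Matrix.of ν with hνM
  have hzν : zM C * νM = eM C := by
    have := hl; rw [conv_eq_mul] at this; exact this
  have hνz : νM * zM C = eM C := by
    have := hr; rw [conv_eq_mul] at this; exact this
  have hcor : eM C * (νM * eM C) = νM := by
    have h1 := hcorner
    rw [conv_eq_mul (eFun C) (conv C ν (eFun C)), conv_eq_mul ν (eFun C)] at h1
    exact h1
  have heν : eM C * νM = νM := by
    calc eM C * νM = eM C * (eM C * (νM * eM C)) := by rw [hcor]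
      _ = (eM C * eM C) * (νM * eM C) := by rw [mul_assoc]
      _ = eM C * (νM * eM C) := by rw [eM_mul_eM]
      _ = νM := hcor
  have hνe : νM * eM C = νM := by
    calc νM * eM C = (eM C * (νM * eM C)) * eM C := by rw [hcor]
      _ = eM C * ((νM * eM C) * eM C) := by rw [mul_assoc]
      _ = eM C * (νM * (eM C * eM C)) := by rw [mul_assoc]
      _ = eM C * (νM * eM C) := by rw [eM_mul_eM]
      _ = νM := hcor
  -- the matrices A, B with A * B = B * A = 1
  set A : Matrix C C ℚ := 1 - eM C + zM C with hA
  set B : Matrix C C ℚ := νM + 1 - eM C with hB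
  have hAB : A * B = 1 := by
    rw [hA, hB]
    simp only [mul_add, add_mul, sub_mul, mul_sub, one_mul, mul_one, eM_mul_eM, heν, hνe,
      hzν, zM_mul_eM]
    abel
  have hBA : B * A = 1 := by
    rw [hA, hB]
    simp only [mul_add, add_mul, sub_mul, mul_sub, one_mul, mul_one, eM_mul_eM, heν, hνe,
      hνz, eM_mul_zM, zM_mul_eM]
    abel
  -- the matrix Z counting nonidentity morphisms, and w n = Z^n applied to ones
  set Z : Matrix C C ℚ := zM C - 1 with hZ
  set w : ℕ → C → ℚ := fun n => (Z ^ n).mulVec (fun _ => 1) with hw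
  have hw0 : w 0 = fun _ => 1 := by
    funext x; simp [hw, Matrix.one_mulVec]
  have hwsucc : ∀ n, w (n + 1) = Z.mulVec (w n) := by
    intro n
    simp only [hw]
    rw [Matrix.mulVec_mulVec, ← pow_succ']
  have heOnes : (eM C).mulVec (fun _ => 1) = fun _ => 1 := by
    funext x
    simp only [Matrix.mulVec, dotProduct, mul_one]
    exact eM_row_sum x
  have heW : ∀ n, (eM C).mulVec (w n) = w n := by
    intro n
    induction n with
    | zero => rw [hw0, heOnes]
    | succ n ih =>
      have hez : eM C * Z = Z + (1 - eM C) := by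
        rw [hZ, mul_sub, eM_mul_zM, mul_one]; abel
      calc (eM C).mulVec (w (n + 1)) = (eM C).mulVec (Z.mulVec (w n)) := by rw [hwsucc]
        _ = (eM C * Z).mulVec (w n) := by rw [Matrix.mulVec_mulVec]
        _ = (Z + (1 - eM C)).mulVec (w n) := by rw [hez]
        _ = Z.mulVec (w n) + ((1 : Matrix C C ℚ).mulVec (w n) - (eM C).mulVec (w n)) := by
            simp [Matrix.add_mulVec, Matrix.sub_mulVec]
        _ = Z.mulVec (w n) := by rw [Matrix.one_mulVec, ih, sub_self, add_zero]
        _ = w (n + 1) := (hwsucc n).symm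
  -- the polynomial matrix K and the polynomials p, q
  set u : C → ℚ := fun x => (Nat.card { a : F x // ∀ h ∈ H, h • a = a } : ℚ) with hu
  set m : Matrix C C ℚ := eM C - zM C with hm
  set Kp : Matrix C C (Polynomial ℚ) := 1 + (Polynomial.X : Polynomial ℚ) • m.map Polynomial.C
    with hKp
  -- evaluation at -1
  have hKA : (Polynomial.evalRingHom (-1 : ℚ)).mapMatrix Kp = A := by
    ext x y
    simp only [RingHom.mapMatrix_apply, Matrix.map_apply, hKp, Matrix.add_apply,
      Matrix.smul_apply, Matrix.one_apply, smul_eq_mul, hA, hm, Matrix.sub_apply,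
      coe_evalRingHom]
    by_cases hxy : x = y <;>
      simp [hxy, Polynomial.eval_mul, Polynomial.eval_add] <;> ring
  have hdetq : (Kp.det).eval (-1) = A.det := by
    have h1 := (Polynomial.evalRingHom (-1 : ℚ)).map_det Kp
    rw [hKA] at h1
    exact h1
  have hdetA : A.det ≠ 0 := by
    have h1 := congrArg Matrix.det hAB
    rw [Matrix.det_mul, Matrix.det_one] at h1
    intro h
    rw [h, zero_mul] at h1
    exact zero_ne_one h1
  have hadjA : A.adjugate = A.det • B := by
    calc A.adjugate = A.adjugate * (A * B) := by rw [hAB, mul_one]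
      _ = (A.adjugate * A) * B := by rw [mul_assoc]
      _ = (A.det • 1) * B := by rw [Matrix.adjugate_mul]
      _ = A.det • B := by rw [Matrix.smul_mul, one_mul]
  have hBrow : ∀ x : C, ∑ y : C, B x y = ∑ y : C, ν x y := by
    intro x
    have h1 : ∀ y : C, B x y = ν x y + ((1 : Matrix C C ℚ) x y - eM C x y) := by
      intro y; rw [hB]
      simp only [Matrix.add_apply, Matrix.sub_apply, hνM, Matrix.of_apply]
      ring
    rw [Finset.sum_congr rfl fun y _ => h1 y, Finset.sum_add_distrib,
      Finset.sum_sub_distrib]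
    have h2 : ∑ y : C, (1 : Matrix C C ℚ) x y = 1 := by
      simp [Matrix.one_apply]
    rw [h2, eM_row_sum, sub_self, add_zero]
  refine ⟨∑ x : C, ∑ y : C, Polynomial.C (u x) * Kp.adjugate x y, Kp.det, ?_, ?_, ?_⟩
  · rw [hdetq]; exact hdetA
  · -- the power series identity
    set τ : Polynomial ℚ →+* PowerSeries ℚ := Polynomial.coeToPowerSeries.ringHom with hτ
    set vS : C → PowerSeries ℚ := fun x => PowerSeries.mk fun n => w n x with hvS
    have hmW : ∀ n, m.mulVec (w n) = - w (n + 1) := by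
      intro n
      have h1 : m = (eM C - 1) - Z := by rw [hm, hZ]; abel
      rw [h1, Matrix.sub_mulVec, Matrix.sub_mulVec, Matrix.one_mulVec, heW, sub_self,
        zero_sub, ← hwsucc]
    have hτone : ∀ x y : C, τ ((1 : Matrix C C (Polynomial ℚ)) x y)
        = (if x = y then (1 : PowerSeries ℚ) else 0) := by
      intro x y
      by_cases hxy : x = y <;> simp [hxy, Matrix.one_apply]
    have hKv : (τ.mapMatrix Kp).mulVec vS = fun _ => (1 : PowerSeries ℚ) := by
      funext x
      have expand : (τ.mapMatrix Kp).mulVec vS x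
          = vS x + PowerSeries.X * ∑ y : C, PowerSeries.C (m x y) * vS y := by
        show ∑ y : C, τ (Kp x y) * vS y = _
        have h1 : ∀ y : C, τ (Kp x y) * vS y
            = (if x = y then (1 : PowerSeries ℚ) else 0) * vS y
              + PowerSeries.X * (PowerSeries.C (m x y) * vS y) := by
          intro y
          rw [hKp]
          simp only [Matrix.add_apply, Matrix.smul_apply, Matrix.map_apply, smul_eq_mul,
            map_add, map_mul, hτone]
          rw [hτ]
          simp only [Polynomial.coeToPowerSeries.ringHom_apply, Polynomial.coe_X,
            Polynomial.coe_C]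
          ring
        rw [Finset.sum_congr rfl fun y _ => h1 y, Finset.sum_add_distrib]
        congr 1
        · simp
        · rw [Finset.mul_sum]
      rw [expand]
      apply PowerSeries.ext
      intro n
      have hcoeffS : ∀ k, PowerSeries.coeff k (∑ y : C, PowerSeries.C (m x y) * vS y)
          = m.mulVec (w k) x := by
        intro k
        rw [map_sum]
        simp only [PowerSeries.coeff_C_mul, hvS, PowerSeries.coeff_mk]
        simp [Matrix.mulVec, dotProduct]
      cases n with
      | zero =>
        rw [map_add, PowerSeries.coeff_zero_X_mul, add_zero]
        have : PowerSeries.coeff 0 (vS x) = w 0 x := by simp [hvS]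
        rw [this, hw0]
        simp [PowerSeries.coeff_one]
      | succ k =>
        rw [map_add, PowerSeries.coeff_succ_X_mul, hcoeffS, hmW]
        have : PowerSeries.coeff (k + 1) (vS x) = w (k + 1) x := by simp [hvS]
        rw [this]
        simp [PowerSeries.coeff_one]
    have hadjS : (τ.mapMatrix Kp.adjugate) * (τ.mapMatrix Kp)
        = τ Kp.det • (1 : Matrix C C (PowerSeries ℚ)) := by
      have h1 : τ.mapMatrix (Kp.adjugate * Kp) = τ.mapMatrix Kp.adjugate * τ.mapMatrix Kp :=
        map_mul _ _ _
      rw [← h1, Matrix.adjugate_mul]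
      ext x y
      simp only [RingHom.mapMatrix_apply, Matrix.map_apply, Matrix.smul_apply,
        Matrix.one_apply, smul_eq_mul, map_mul]
      by_cases hxy : x = y <;> simp [hxy]
    have hvq : τ Kp.det • vS = (τ.mapMatrix Kp.adjugate).mulVec (fun _ => 1) := by
      calc τ Kp.det • vS
          = (τ Kp.det • (1 : Matrix C C (PowerSeries ℚ))).mulVec vS := by
            rw [Matrix.smul_mulVec, Matrix.one_mulVec]
        _ = ((τ.mapMatrix Kp.adjugate) * (τ.mapMatrix Kp)).mulVec vS := by rw [hadjS]
        _ = (τ.mapMatrix Kp.adjugate).mulVec ((τ.mapMatrix Kp).mulVec vS) :=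
            (Matrix.mulVec_mulVec _ _ _).symm
        _ = (τ.mapMatrix Kp.adjugate).mulVec (fun _ => 1) := by rw [hKv]
    have hmk : PowerSeries.mk (fun n =>
          (Nat.card { c : FChain F (fun φ => Fmap φ) n //
            ∀ (i : Fin (n + 1)), ∀ h ∈ H, h • c.pt i = c.pt i } : ℚ))
        = ∑ x : C, PowerSeries.C (u x) * vS x := by
      apply PowerSeries.ext
      intro n
      rw [PowerSeries.coeff_mk, map_sum]
      simp only [PowerSeries.coeff_C_mul, hvS, PowerSeries.coeff_mk]
      rw [chainCard F Fmap H n hFequiv, ← pathSum Z n u]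
      refine Finset.sum_congr rfl fun f _ => ?_
      rw [mul_comm]
      congr 1
    have hcoe : ∀ r : Polynomial ℚ, (r : PowerSeries ℚ) = τ r := fun r =>
      (Polynomial.coeToPowerSeries.ringHom_apply (φ := r)).symm
    rw [hcoe, hcoe, hmk]
    calc (∑ x : C, PowerSeries.C (u x) * vS x) * τ Kp.det
        = ∑ x : C, PowerSeries.C (u x) * (τ Kp.det • vS) x := by
          rw [Finset.sum_mul]
          refine Finset.sum_congr rfl fun x _ => ?_
          simp only [Pi.smul_apply, smul_eq_mul]
          ring
      _ = ∑ x : C, PowerSeries.C (u x) * (τ.mapMatrix Kp.adjugate).mulVec (fun _ => 1) x := by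
          rw [hvq]
      _ = ∑ x : C, PowerSeries.C (u x) * ∑ y : C, τ (Kp.adjugate x y) := by
          refine Finset.sum_congr rfl fun x _ => ?_
          congr 1
          show ∑ y : C, τ (Kp.adjugate x y) * 1 = _
          simp
      _ = τ (∑ x : C, ∑ y : C, Polynomial.C (u x) * Kp.adjugate x y) := by
          rw [map_sum]
          refine Finset.sum_congr rfl fun x _ => ?_
          rw [map_sum, Finset.mul_sum]
          refine Finset.sum_congr rfl fun y _ => ?_
          rw [map_mul, hτ]
          simp [Polynomial.coeToPowerSeries.ringHom_apply, Polynomial.coe_C]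
  · -- evaluation at -1
    have hadjval : ∀ x y : C, (Kp.adjugate x y).eval (-1) = A.det * B x y := by
      intro x y
      have h1 := (Polynomial.evalRingHom (-1 : ℚ)).map_adjugate Kp
      rw [hKA] at h1
      have h2 : (Kp.adjugate x y).eval (-1)
          = ((Polynomial.evalRingHom (-1 : ℚ)).mapMatrix Kp.adjugate) x y := rfl
      rw [h2, h1, hadjA]
      simp [Matrix.smul_apply]
    rw [hdetq]
    have hev : (∑ x : C, ∑ y : C, Polynomial.C (u x) * Kp.adjugate x y).eval (-1)
        = ∑ x : C, ∑ y : C, u x * (A.det * B x y) := by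
      rw [Polynomial.eval_finset_sum]
      refine Finset.sum_congr rfl fun x _ => ?_
      rw [Polynomial.eval_finset_sum]
      refine Finset.sum_congr rfl fun y _ => ?_
      rw [Polynomial.eval_mul, Polynomial.eval_C, hadjval]
    rw [hev]
    have : ∀ x : C, ∑ y : C, u x * (A.det * B x y) = A.det * ((∑ y : C, ν x y) * u x) := by
      intro x
      rw [← Finset.mul_sum, ← Finset.mul_sum, ← hBrow x]
      ring
    rw [Finset.sum_congr rfl fun x _ => this x, ← Finset.mul_sum]


end Main
end

section
/- Let G be a finite group and E the set of cyclic subgroups of G. Then in the rational representation ring Q ⊗ R(G) of complex characters, the trivial character satisfies 𝟙_G = Σ_{H ∈ E} (−μ_{E₊}(H,∞)/[G:H]) · Ind_H^G(𝟙_H), where E₊ is the poset of cyclic subgroups with an added maximum ∞ and μ its Möbius function. -/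
open scoped Classical

/-- The reduced Euler characteristic of (the order complex of) a poset `P`.
For the poset `E₊ = E ⊔ {∞}`, one has `μ_{E₊}(H, ∞) = χ̃(E_{>H})` for `H ∈ E`
(Philip Hall's theorem), which is the form used below. -/
noncomputable def reducedEuler (P : Type*) [Preorder P] : ℚ :=
  -1 + ∑ᶠ d : ℕ, (-1 : ℚ) ^ d * (Nat.card { f : Fin (d + 1) → P // StrictMono f } : ℚ)

noncomputable def cC (P : Type*) [Preorder P] (d : ℕ) : ℕ :=
  Nat.card { f : Fin d → P // StrictMono f }

lemma reducedEuler_def (P : Type*) [Preorder P] :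
    reducedEuler P = -1 + ∑ᶠ d : ℕ, (-1 : ℚ) ^ d * (cC P (d + 1) : ℚ) := rfl

lemma cC_zero (P : Type*) [Preorder P] : cC P 0 = 1 := by
  have : Unique { f : Fin 0 → P // StrictMono f } :=
    ⟨⟨⟨fun i => i.elim0, fun a => a.elim0⟩⟩, fun f => Subtype.ext (funext fun i => i.elim0)⟩
  exact Nat.card_unique

lemma cC_one (P : Type*) [Preorder P] : cC P 1 = Nat.card P := by
  refine Nat.card_congr ⟨fun f => f.1 0,
    fun x => ⟨fun _ => x, fun a b h => (h.ne (Subsingleton.elim a b)).elim⟩, ?_, ?_⟩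
  · intro f
    exact Subtype.ext (funext fun i => by have h : i = 0 := Subsingleton.elim i 0; rw [h])
  · intro x; rfl

lemma cC_vanish (P : Type*) [Preorder P] [Finite P] {d : ℕ} (h : Nat.card P < d) :
    cC P d = 0 := by
  have : IsEmpty { f : Fin d → P // StrictMono f } := by
    refine ⟨fun f => absurd (Nat.card_le_card_of_injective _ f.2.injective) ?_⟩
    simpa using h
  exact Nat.card_of_isEmpty

lemma reducedEuler_eq_sum (P : Type*) [Preorder P] [Finite P] {n : ℕ} (hn : Nat.card P ≤ n) :
    reducedEuler P = -1 + ∑ d ∈ Finset.range n, (-1 : ℚ) ^ d * (cC P (d + 1) : ℚ) := by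
  rw [reducedEuler_def]
  congr 1
  apply finsum_eq_sum_of_support_subset
  intro d hd
  simp only [Function.mem_support] at hd
  simp only [Finset.coe_range, Set.mem_Iio]
  by_contra h
  exact hd (by rw [cC_vanish P (by omega)]; simp)

lemma strictMono_cases {P : Type*} [Preorder P] {d : ℕ} (b : P)
    (g : Fin d → { x : P // b < x }) (hg : StrictMono g) :
    StrictMono (Fin.cases (motive := fun _ => P) b (fun i => (g i).1)) := by
  intro i j hij
  induction j using Fin.cases with
  | zero => exact absurd hij (Fin.not_lt_zero i)
  | succ k =>
    induction i using Fin.cases with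
    | zero => simpa using (g k).2
    | succ m =>
      have hmk : m < k := by rwa [Fin.succ_lt_succ_iff] at hij
      simpa using hg hmk

lemma cC_cone_succ (P : Type*) [PartialOrder P] [Finite P] (b : P) (hb : ∀ x, b ≤ x) (d : ℕ) :
    cC P (d + 1) = cC { x : P // b < x } d + cC { x : P // b < x } (d + 1) := by
  rw [cC, cC, cC, ← Nat.card_sum]
  apply Nat.card_congr
  refine ⟨fun f => ?_, fun s => ?_, ?_, ?_⟩
  · by_cases h : f.1 0 = b
    · refine Sum.inl ⟨fun i => ⟨f.1 i.succ, h ▸ f.2 (Fin.succ_pos i)⟩, ?_⟩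
      intro i j hij
      exact Subtype.mk_lt_mk.mpr (f.2 (Fin.succ_lt_succ_iff.mpr hij))
    · refine Sum.inr ⟨fun i => ⟨f.1 i, lt_of_lt_of_le (lt_of_le_of_ne (hb _) (Ne.symm h))
        (f.2.monotone (Fin.zero_le i))⟩, ?_⟩
      intro i j hij
      exact Subtype.mk_lt_mk.mpr (f.2 hij)
  · exact s.elim
      (fun g => ⟨Fin.cases b (fun i => (g.1 i).1), strictMono_cases b g.1 g.2⟩)
      (fun g => ⟨fun i => (g.1 i).1, fun i j hij => Subtype.coe_lt_coe.mpr (g.2 hij)⟩)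
  · intro f
    by_cases h : f.1 0 = b
    · simp only [dif_pos h]
      refine Subtype.ext (funext fun i => ?_)
      induction i using Fin.cases with
      | zero => simpa using h.symm
      | succ m => simp
    · simp only [dif_neg h, Sum.elim_inr]
  · intro s
    rcases s with g | g
    · have h0 : (Fin.cases (motive := fun _ => P) b fun i => (g.1 i).1) 0 = b := rfl
      simp only [Sum.elim_inl, h0, ↓reduceDIte]
      refine congrArg Sum.inl (Subtype.ext (funext fun i => Subtype.ext ?_))
      simp
    · have h0 : (fun i : Fin (d + 1) => (g.1 i).1) 0 ≠ b := (g.1 0).2.ne'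
      simp only [Sum.elim_inr, h0, ↓reduceDIte]

lemma reducedEuler_of_bot (P : Type*) [PartialOrder P] [Finite P] (b : P) (hb : ∀ x, b ≤ x) :
    reducedEuler P = 0 := by
  set P' := { x : P // b < x } with hP'
  have hle : Nat.card P' ≤ Nat.card P := Nat.card_le_card_of_injective _ Subtype.val_injective
  set m := Nat.card P with hm
  rw [reducedEuler_eq_sum P (n := m + 1) (by omega)]
  have h1 : ∑ d ∈ Finset.range (m + 1), (-1 : ℚ) ^ d * (cC P (d + 1) : ℚ)
      = (∑ d ∈ Finset.range (m + 1), (-1 : ℚ) ^ d * (cC P' d : ℚ))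
        + ∑ d ∈ Finset.range (m + 1), (-1 : ℚ) ^ d * (cC P' (d + 1) : ℚ) := by
    rw [← Finset.sum_add_distrib]
    refine Finset.sum_congr rfl fun d _ => ?_
    rw [cC_cone_succ P b hb d]
    push_cast
    ring
  have h2 : ∑ d ∈ Finset.range (m + 1), (-1 : ℚ) ^ d * (cC P' d : ℚ)
      = 1 - ∑ d ∈ Finset.range m, (-1 : ℚ) ^ d * (cC P' (d + 1) : ℚ) := by
    rw [Finset.sum_range_succ']
    have he : ∀ i : ℕ, (-1 : ℚ) ^ (i + 1) * (cC P' (i + 1) : ℚ)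
        = -((-1 : ℚ) ^ i * (cC P' (i + 1) : ℚ)) := fun i => by ring
    simp only [he, Finset.sum_neg_distrib, cC_zero]
    push_cast
    ring
  have h3 : ∑ d ∈ Finset.range (m + 1), (-1 : ℚ) ^ d * (cC P' (d + 1) : ℚ)
      = ∑ d ∈ Finset.range m, (-1 : ℚ) ^ d * (cC P' (d + 1) : ℚ) := by
    rw [Finset.sum_range_succ, cC_vanish P' (by omega)]
    simp
  rw [h1, h2, h3]
  ring

lemma cC_sigma (P : Type*) [Preorder P] [Fintype P] (d : ℕ) :
    cC P (d + 2) = ∑ H : P, cC { K : P // H < K } (d + 1) := by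
  have e : { f : Fin (d + 2) → P // StrictMono f } ≃
      Σ H : P, { g : Fin (d + 1) → { K : P // H < K } // StrictMono g } := by
    refine ⟨fun f => ⟨f.1 0, ⟨fun i => ⟨f.1 i.succ, f.2 (Fin.succ_pos i)⟩,
        fun i j hij => Subtype.mk_lt_mk.mpr (f.2 (Fin.succ_lt_succ_iff.mpr hij))⟩⟩,
      fun s => ⟨Fin.cases s.1 (fun i => (s.2.1 i).1), strictMono_cases s.1 s.2.1 s.2.2⟩,
      ?_, ?_⟩
    · intro f
      refine Subtype.ext (funext fun i => ?_)
      induction i using Fin.cases with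
      | zero => simp
      | succ m => simp
    · rintro ⟨H, g⟩
      refine Sigma.ext rfl ?_
      refine heq_of_eq (Subtype.ext (funext fun i => Subtype.ext ?_))
      simp
  simp only [cC, Nat.card_congr e, Nat.card_eq_fintype_card, Fintype.card_sigma]

lemma sum_neg_reducedEuler (P : Type*) [PartialOrder P] [Fintype P] (b : P) (hb : ∀ x, b ≤ x) :
    ∑ H : P, -reducedEuler { K : P // H < K } = 1 := by
  set m := Nat.card P with hm
  have hcard : ∀ H : P, Nat.card { K : P // H < K } ≤ m :=
    fun H => Nat.card_le_card_of_injective _ Subtype.val_injective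
  have h1 : ∀ H : P, -reducedEuler { K : P // H < K }
      = 1 - ∑ d ∈ Finset.range m, (-1 : ℚ) ^ d * (cC { K : P // H < K } (d + 1) : ℚ) :=
    fun H => by rw [reducedEuler_eq_sum _ (hcard H)]; ring
  simp only [h1]
  rw [Finset.sum_sub_distrib, Finset.sum_comm]
  have h2 : ∀ d : ℕ, ∑ H : P, (-1 : ℚ) ^ d * (cC { K : P // H < K } (d + 1) : ℚ)
      = (-1 : ℚ) ^ d * (cC P (d + 2) : ℚ) := fun d => by
    rw [← Finset.mul_sum, cC_sigma P d]
    push_cast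
    ring
  simp only [h2]
  have h3 : ∑ d ∈ Finset.range (m + 1), (-1 : ℚ) ^ d * (cC P (d + 1) : ℚ) = 1 := by
    have h0 := reducedEuler_of_bot P b hb
    rw [reducedEuler_eq_sum P (n := m + 1) (by omega)] at h0
    linarith
  rw [Finset.sum_range_succ'] at h3
  have he : ∀ i : ℕ, (-1 : ℚ) ^ (i + 1) * (cC P (i + 1 + 1) : ℚ)
      = -((-1 : ℚ) ^ i * (cC P (i + 2) : ℚ)) := fun i => by ring
  simp only [he, Finset.sum_neg_distrib, zero_add, cC_one, pow_zero, one_mul] at h3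
  have h4 : ∑ d ∈ Finset.range m, (-1 : ℚ) ^ d * (cC P (d + 2) : ℚ) = (m : ℚ) - 1 := by
    linarith
  rw [h4]
  simp [Finset.card_univ, hm, Nat.card_eq_fintype_card]

lemma cC_congr {P P' : Type*} [Preorder P] [Preorder P'] (e : P ≃o P') (d : ℕ) :
    cC P d = cC P' d := by
  refine Nat.card_congr ⟨fun f => ⟨e ∘ f.1, e.strictMono.comp f.2⟩,
    fun g => ⟨e.symm ∘ g.1, e.symm.strictMono.comp g.2⟩, ?_, ?_⟩
  · intro f; exact Subtype.ext (funext fun i => e.symm_apply_apply _)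
  · intro g; exact Subtype.ext (funext fun i => e.apply_symm_apply _)


lemma reducedEuler_congr {P P' : Type*} [Preorder P] [Preorder P'] (e : P ≃o P') :
    reducedEuler P = reducedEuler P' := by
  rw [reducedEuler_def, reducedEuler_def]
  exact congrArg _ (finsum_congr fun d => by rw [cC_congr e])


lemma isCyclic_zpowers {G : Type*} [Group G] (y : G) : IsCyclic (Subgroup.zpowers y) := by
  constructor
  refine ⟨⟨y, Subgroup.mem_zpowers y⟩, ?_⟩
  rintro ⟨x, k, rfl⟩
  exact ⟨k, by ext; simp⟩

lemma key_sum {G : Type*} [Group G] [Fintype G] (y : G) :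
    ∑ H : { H : Subgroup G // IsCyclic ↥H },
      (if y ∈ H.1 then -reducedEuler { K : Subgroup G // IsCyclic ↥K ∧ H.1 < K } else 0)
      = 1 := by
  set Q := { H : Subgroup G // IsCyclic ↥H ∧ Subgroup.zpowers y ≤ H } with hQ
  set F : Subgroup G → ℚ :=
    fun N => -reducedEuler { K : Subgroup G // IsCyclic ↥K ∧ N < K } with hF
  have hq : ∑ H : Q, F H.1 = 1 := by
    have iso : ∀ H : Q, ({ K : Q // H < K } ≃o { K : Subgroup G // IsCyclic ↥K ∧ H.1 < K }) :=
      fun H =>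
      { toFun := fun K => ⟨K.1.1, K.1.2.1, Subtype.coe_lt_coe.mpr K.2⟩
        invFun := fun K => ⟨⟨K.1, K.2.1, le_trans H.2.2 K.2.2.le⟩, Subtype.mk_lt_mk.mpr K.2.2⟩
        left_inv := fun K => rfl
        right_inv := fun K => rfl
        map_rel_iff' := Iff.rfl }
    have := sum_neg_reducedEuler Q ⟨Subgroup.zpowers y, isCyclic_zpowers y, le_rfl⟩
      (fun H => H.2.2)
    rw [← this]
    exact Finset.sum_congr rfl fun H _ => congrArg Neg.neg (reducedEuler_congr (iso H)).symm
  have hA : ∑ H : { H : Subgroup G // IsCyclic ↥H }, (if y ∈ H.1 then F H.1 else 0)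
      = ∑ N ∈ Finset.univ.filter (fun N : Subgroup G => IsCyclic ↥N),
          (if y ∈ N then F N else 0) :=
    (Finset.sum_subtype (Finset.univ.filter fun N : Subgroup G => IsCyclic ↥N)
      (fun x => by simp) (fun N => if y ∈ N then F N else 0)).symm
  have hB : ∑ H : Q, F H.1
      = ∑ N ∈ Finset.univ.filter
          (fun N : Subgroup G => IsCyclic ↥N ∧ Subgroup.zpowers y ≤ N), F N :=
    (Finset.sum_subtype (Finset.univ.filter
        fun N : Subgroup G => IsCyclic ↥N ∧ Subgroup.zpowers y ≤ N)
      (fun x => by simp) F).symm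
  rw [hA, Finset.sum_filter]
  rw [hB, Finset.sum_filter] at hq
  rw [← hq]
  refine Finset.sum_congr rfl fun N _ => ?_
  by_cases h1 : IsCyclic ↥N <;> by_cases h2 : y ∈ N <;>
    simp [h1, h2, Subgroup.zpowers_le]

/-- Brauer's explicit form of Artin induction: in the rational
representation ring `ℚ ⊗ R(G)` of complex characters of a finite group `G`,
`𝟙_G = Σ_{H cyclic} (−μ_{E₊}(H,∞)/[G:H]) · Ind_H^G(𝟙_H)`.  Since characters
are determined by their values and `ℚ ⊗ R(G)` embeds into class functions,
this is stated as the equality of character values at every `g ∈ G`, using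
the standard formula `Ind_H^G(𝟙_H)(g) = |{x ∈ G : x⁻¹gx ∈ H}| / |H|`. -/
theorem brauer_explicit_artin_induction {G : Type*} [Group G] [Fintype G] :
    ∀ g : G, (1 : ℚ) =
      ∑ᶠ H : { H : Subgroup G // IsCyclic ↥H },
        (- reducedEuler { K : Subgroup G // IsCyclic ↥K ∧ H.1 < K } /
            ((H.1.index : ℚ))) *
          ((Nat.card { x : G // x⁻¹ * g * x ∈ H.1 } : ℚ) / (Nat.card ↥H.1 : ℚ)) := by
  intro g
  rw [finsum_eq_sum_of_fintype]
  have hcnt : ∀ H : Subgroup G, (Nat.card { x : G // x⁻¹ * g * x ∈ H } : ℚ)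
      = ∑ x : G, (if x⁻¹ * g * x ∈ H then (1 : ℚ) else 0) := by
    intro H
    rw [Nat.card_eq_fintype_card, Fintype.card_subtype, Finset.card_filter]
    push_cast
    rfl
  have hG : (Fintype.card G : ℚ) ≠ 0 := by
    exact_mod_cast Fintype.card_ne_zero
  have hterm : ∀ H : { H : Subgroup G // IsCyclic ↥H },
      (- reducedEuler { K : Subgroup G // IsCyclic ↥K ∧ H.1 < K } / ((H.1.index : ℚ))) *
        ((Nat.card { x : G // x⁻¹ * g * x ∈ H.1 } : ℚ) / (Nat.card ↥H.1 : ℚ))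
      = (∑ x : G, if x⁻¹ * g * x ∈ H.1
          then -reducedEuler { K : Subgroup G // IsCyclic ↥K ∧ H.1 < K } else 0)
          / (Fintype.card G : ℚ) := by
    intro H
    have hic : ((H.1.index : ℚ)) * (Nat.card ↥H.1 : ℚ) = (Fintype.card G : ℚ) := by
      rw [← Nat.cast_mul, Subgroup.index_mul_card, Nat.card_eq_fintype_card]
    rw [div_mul_div_comm, hic, hcnt, Finset.mul_sum]
    congr 1
    refine Finset.sum_congr rfl fun x _ => ?_
    split_ifs <;> ring
  simp only [hterm]
  rw [← Finset.sum_div]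
  rw [Finset.sum_comm]
  have hx : ∀ x : G, ∑ H : { H : Subgroup G // IsCyclic ↥H },
      (if x⁻¹ * g * x ∈ H.1
        then -reducedEuler { K : Subgroup G // IsCyclic ↥K ∧ H.1 < K } else 0) = 1 :=
    fun x => key_sum (x⁻¹ * g * x)
  simp only [hx]
  rw [Finset.sum_const, Finset.card_univ, nsmul_eq_mul, mul_one, div_self hG]
end

section
/- Let G be a finite group, D a finite G-category, and for H ≤ G let D^H be the H-fixed subcategory. Then D has series Lefschetz invariant if and only if D^H has series Euler characteristic for every H ≤ G, and in that case Λ_Σ(D) = Σ_{H ∈ [G\All(G)]} χ_Σ(D^H) ε_H, where the sum is over conjugacy class representatives of subgroups and ε_H are the primitive idempotents of the rational Burnside ring Ω(G). -/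
open CategoryTheory
open scoped Classical

universe u v

/-- The conjugate subgroup `gHg⁻¹`. -/
def conjSub {G : Type*} [Group G] (H : Subgroup G) (g : G) : Subgroup G :=
  H.map (MulAut.conj g).toMonoidHom

/-- A non-degenerate `n`-simplex of the nerve of a category `D`: a chain of
`n` composable non-identity morphisms. -/
structure GChain (D : Type u) [Category.{v} D] (n : ℕ) where
  obj : Fin (n + 1) → D
  hom : ∀ i : Fin n, obj i.castSucc ⟶ obj i.succ
  nondeg : ∀ i : Fin n, ¬ ∃ h : obj i.castSucc = obj i.succ, hom i = eqToHom h

/-- The number of non-degenerate `n`-simplices of the nerve of the `H`-fixed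
subcategory `D^H` of a `G`-category `D` (a category with a `G`-action on
objects and morphisms). -/
noncomputable def fixedChainCount {G : Type*} [Group G]
    (D : Type u) [Category.{v} D] [MulAction G D]
    (mapHom : ∀ (g : G) {x y : D}, (x ⟶ y) → (g • x ⟶ g • y))
    (H : Subgroup G) (n : ℕ) : ℕ :=
  Nat.card { c : GChain D n // ∀ h ∈ H,
    (∀ i : Fin (n + 1), h • c.obj i = c.obj i) ∧
    (∀ i : Fin n, HEq (mapHom h (c.hom i)) (c.hom i)) }

section Aux
variable {G : Type*} [Group G] {D : Type u} [Category.{v} D] [MulAction G D]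
variable (mapHom : ∀ (g : G) {x y : D}, (x ⟶ y) → (g • x ⟶ g • y))

theorem mapHom_congr (g : G) {x x' y y' : D} (hx : x = x') (hy : y = y')
    {f : x ⟶ y} {f' : x' ⟶ y'} (h : HEq f f') :
    HEq (mapHom g f) (mapHom g f') := by
  subst hx; subst hy
  exact heq_of_eq (congrArg (fun f => mapHom g f) (eq_of_heq h))

variable (hid : ∀ (g : G) (x : D), mapHom g (𝟙 x) = 𝟙 (g • x))
variable (hone : ∀ {x y : D} (f : x ⟶ y), HEq (mapHom (1 : G) f) f)
variable (hmul : ∀ (g g' : G) {x y : D} (f : x ⟶ y),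
      HEq (mapHom (g * g') f) (mapHom g (mapHom g' f)))

include hone hmul in
theorem inv_map_heq (g : G) {x y : D} (f : x ⟶ y) :
    HEq (mapHom g⁻¹ (mapHom g f)) f := by
  have h1 : HEq (mapHom (g⁻¹ * g) f) (mapHom g⁻¹ (mapHom g f)) := hmul g⁻¹ g f
  have h2 : HEq (mapHom (g⁻¹ * g) f) (mapHom (1 : G) f) := by
    rw [inv_mul_cancel]
  exact (h1.symm.trans h2).trans (hone f)

include hid hone hmul in
theorem pred_smul_iff (g : G) {x y : D} (f : x ⟶ y) :
    (∃ h : g • x = g • y, mapHom g f = eqToHom h) ↔ (∃ h : x = y, f = eqToHom h) := by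
  constructor
  · rintro ⟨h, e⟩
    have hxy : x = y := MulAction.injective g h
    subst hxy
    refine ⟨rfl, ?_⟩
    have e' : mapHom g f = 𝟙 (g • x) := by simpa using e
    have h1 : HEq (mapHom g⁻¹ (mapHom g f)) f := inv_map_heq mapHom hone hmul g f
    rw [e', hid] at h1
    have hx : g⁻¹ • g • x = x := inv_smul_smul g x
    rw [hx] at h1
    simpa using (eq_of_heq h1).symm
  · rintro ⟨h, e⟩
    subst h
    refine ⟨rfl, ?_⟩
    simpa using hid g x ▸ (by simpa using e : f = 𝟙 x) ▸ rfl

theorem GChain.ext' {n : ℕ} {c₁ c₂ : GChain D n} (ho : ∀ i, c₁.obj i = c₂.obj i)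
    (hh : ∀ i, HEq (c₁.hom i) (c₂.hom i)) : c₁ = c₂ := by
  obtain ⟨o₁, h₁, n₁⟩ := c₁
  obtain ⟨o₂, h₂, n₂⟩ := c₂
  obtain rfl : o₁ = o₂ := funext ho
  obtain rfl : h₁ = h₂ := funext fun i => eq_of_heq (hh i)
  rfl

def chainSmul (g : G) {n : ℕ} (c : GChain D n) : GChain D n where
  obj i := g • c.obj i
  hom i := mapHom g (c.hom i)
  nondeg i h := c.nondeg i ((pred_smul_iff mapHom hid hone hmul g (c.hom i)).mp h)

theorem conjSub_conjSub (K : Subgroup G) (g : G) : conjSub (conjSub K g) g⁻¹ = K := by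
  ext x
  simp only [conjSub, Subgroup.mem_map, MulEquiv.coe_toMonoidHom, MulAut.conj_apply]
  constructor
  · rintro ⟨y, ⟨z, hz, rfl⟩, rfl⟩
    have : g⁻¹ * (g * z * g⁻¹) * g⁻¹⁻¹ = z := by group
    rw [this]; exact hz
  · intro hx
    exact ⟨g * x * g⁻¹, ⟨x, hx, rfl⟩, by group⟩

include hid hone hmul in
theorem chainSmul_fixed {n : ℕ} {c : GChain D n} {K : Subgroup G}
    (hc : ∀ h ∈ K, (∀ i : Fin (n + 1), h • c.obj i = c.obj i) ∧
      (∀ i : Fin n, HEq (mapHom h (c.hom i)) (c.hom i)))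
    (g : G) : ∀ h ∈ conjSub K g,
      (∀ i : Fin (n + 1),
        h • (chainSmul mapHom hid hone hmul g c).obj i =
          (chainSmul mapHom hid hone hmul g c).obj i) ∧
      (∀ i : Fin n,
        HEq (mapHom h ((chainSmul mapHom hid hone hmul g c).hom i))
          ((chainSmul mapHom hid hone hmul g c).hom i)) := by
  rintro h hh
  obtain ⟨k, hk, rfl⟩ := hh
  have hconj : ((MulAut.conj g).toMonoidHom k : G) = g * k * g⁻¹ := rfl
  constructor
  · intro i
    show ((MulAut.conj g).toMonoidHom k : G) • g • c.obj i = g • c.obj i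
    rw [hconj, smul_smul, show g * k * g⁻¹ * g = g * k by group, mul_smul,
      (hc k hk).1 i]
  · intro i
    have e1 : HEq (mapHom (((MulAut.conj g).toMonoidHom k : G) * g) (c.hom i))
        (mapHom ((MulAut.conj g).toMonoidHom k : G) (mapHom g (c.hom i))) :=
      hmul _ g (c.hom i)
    have hhg : ((MulAut.conj g).toMonoidHom k : G) * g = g * k := by
      rw [hconj]; group
    have e2 : HEq (mapHom (((MulAut.conj g).toMonoidHom k : G) * g) (c.hom i))
        (mapHom (g * k) (c.hom i)) := by rw [hhg]
    have e3 : HEq (mapHom (g * k) (c.hom i)) (mapHom g (mapHom k (c.hom i))) :=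
      hmul g k (c.hom i)
    have e4 : HEq (mapHom g (mapHom k (c.hom i))) (mapHom g (c.hom i)) :=
      mapHom_congr mapHom g ((hc k hk).1 _) ((hc k hk).1 _) ((hc k hk).2 i)
    exact (e1.symm.trans (e2.trans (e3.trans e4)))

include hid hone hmul in
theorem fixedChainCount_conj (K : Subgroup G) (g : G) (n : ℕ) :
    fixedChainCount D mapHom (conjSub K g) n = fixedChainCount D mapHom K n := by
  refine Nat.card_congr
    { toFun := fun c => ⟨chainSmul mapHom hid hone hmul g⁻¹ c.1, ?_⟩
      invFun := fun c => ⟨chainSmul mapHom hid hone hmul g c.1,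
        chainSmul_fixed mapHom hid hone hmul c.2 g⟩
      left_inv := ?_
      right_inv := ?_ }
  · have := chainSmul_fixed mapHom hid hone hmul c.2 g⁻¹
    rwa [conjSub_conjSub] at this
  · rintro ⟨c, hc⟩
    refine Subtype.ext (GChain.ext' (fun i => smul_inv_smul g (c.obj i)) fun i => ?_)
    have := inv_map_heq mapHom hone hmul g⁻¹ (c.hom i)
    rwa [inv_inv] at this
  · rintro ⟨c, hc⟩
    refine Subtype.ext (GChain.ext' (fun i => inv_smul_smul g (c.obj i)) fun i => ?_)
    exact inv_map_heq mapHom hone hmul g (c.hom i)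

end Aux

-- evaluation helper
theorem eval_helper {ι : Type} [Fintype ι] (ωK : ι → ℚ) (P Q : ι → ℚ)
    (hQ : ∀ i, Q i ≠ 0) (PK QK : ℚ) (hQK : QK ≠ 0)
    (key : (∑ i : ι, ωK i * (P i * ∏ j ∈ Finset.univ.erase i, Q j)) * QK =
      PK * ∏ i : ι, Q i) :
    (∑ i : ι, ωK i * (P i / Q i)) = PK / QK := by
  have hPi : (∏ i : ι, Q i) ≠ 0 := Finset.prod_ne_zero_iff.mpr fun i _ => hQ i
  have herase : ∀ i : ι, ∏ j ∈ Finset.univ.erase i, Q j = (∏ j : ι, Q j) / Q i := by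
    intro i
    rw [eq_div_iff (hQ i), Finset.prod_erase_mul Finset.univ Q (Finset.mem_univ i)]
  have hterm : ∀ i : ι, ωK i * (P i / Q i) =
      (ωK i * (P i * ∏ j ∈ Finset.univ.erase i, Q j)) / ∏ j : ι, Q j := by
    intro i
    rw [eq_div_iff hPi, herase i]
    field_simp
  rw [Finset.sum_congr rfl fun i _ => hterm i, ← Finset.sum_div,
    (eq_div_iff hQK).mpr key]
  field_simp

/-- a finite `G`-category `D` has series Lefschetz invariant iff
`D^H` has series Euler characteristic for every `H ≤ G`, and in that case
`Λ_Σ(D) = Σ_{[H]} χ_Σ(D^H) ε_H` in the rational Burnside ring `Ω(G)`.  Here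
`Ω(G)` is identified, via the mark homomorphisms `m_K`, with the ring of
conjugation-invariant functions `Subgroup G → ℚ`; membership of
`f_D ∈ Ω(G) ⊗ ℚ[t]_{(t+1)}` means `f_D = Σ_i ω_i ⊗ p_i/q_i` with
`ω_i ∈ Ω(G)`, `q_i(−1) ≠ 0`, read mark-wise; and the displayed formula for
`Λ_Σ(D)` amounts to `m_K(Λ_Σ(D)) = χ_Σ(D^K)` for every `K ≤ G`, since
`m_K(ε_H) = 1` if `K` is conjugate to `H` and `0` otherwise. -/
theorem series_lefschetz_iff_series_euler {G : Type*} [Group G] [Fintype G]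
    (D : Type u) [Category.{v} D] [Fintype D] [∀ x y : D, Fintype (x ⟶ y)]
    [MulAction G D]
    (mapHom : ∀ (g : G) {x y : D}, (x ⟶ y) → (g • x ⟶ g • y))
    (hid : ∀ (g : G) (x : D), mapHom g (𝟙 x) = 𝟙 (g • x))
    (hcomp : ∀ (g : G) {x y z : D} (f : x ⟶ y) (f' : y ⟶ z),
      mapHom g (f ≫ f') = mapHom g f ≫ mapHom g f')
    (hone : ∀ {x y : D} (f : x ⟶ y), HEq (mapHom (1 : G) f) f)
    (hmul : ∀ (g g' : G) {x y : D} (f : x ⟶ y),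
      HEq (mapHom (g * g') f) (mapHom g (mapHom g' f))) :
    -- D has series Lefschetz invariant iff every D^H has series Euler char
    ((∃ (ι : Type) (_ : Fintype ι) (ω : ι → Subgroup G → ℚ)
        (p q : ι → Polynomial ℚ),
        (∀ (i : ι) (K : Subgroup G) (g : G), ω i (conjSub K g) = ω i K) ∧
        (∀ i : ι, (q i).eval (-1) ≠ 0) ∧
        (∀ K : Subgroup G,
          PowerSeries.mk (fun n => (fixedChainCount D mapHom K n : ℚ)) *
              ((∏ i : ι, q i : Polynomial ℚ) : PowerSeries ℚ) =
            ((∑ i : ι, Polynomial.C (ω i K) * (p i *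
                ∏ j ∈ Finset.univ.erase i, q j) : Polynomial ℚ) :
              PowerSeries ℚ))) ↔
      (∀ K : Subgroup G, ∃ p q : Polynomial ℚ, q.eval (-1) ≠ 0 ∧
        PowerSeries.mk (fun n => (fixedChainCount D mapHom K n : ℚ)) *
          (q : PowerSeries ℚ) = (p : PowerSeries ℚ))) ∧
    -- and then m_K(Λ_Σ(D)) = χ_Σ(D^K) for every K, i.e.
    -- Λ_Σ(D) = Σ_{[H]} χ_Σ(D^H) ε_H
    (∀ (ι : Type) (_ : Fintype ι) (ω : ι → Subgroup G → ℚ)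
        (p q : ι → Polynomial ℚ),
        (∀ (i : ι) (K : Subgroup G) (g : G), ω i (conjSub K g) = ω i K) →
        (∀ i : ι, (q i).eval (-1) ≠ 0) →
        (∀ K : Subgroup G,
          PowerSeries.mk (fun n => (fixedChainCount D mapHom K n : ℚ)) *
              ((∏ i : ι, q i : Polynomial ℚ) : PowerSeries ℚ) =
            ((∑ i : ι, Polynomial.C (ω i K) * (p i *
                ∏ j ∈ Finset.univ.erase i, q j) : Polynomial ℚ) :
              PowerSeries ℚ)) →
        ∀ (K : Subgroup G) (pK qK : Polynomial ℚ), qK.eval (-1) ≠ 0 →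
          PowerSeries.mk (fun n => (fixedChainCount D mapHom K n : ℚ)) *
            (qK : PowerSeries ℚ) = (pK : PowerSeries ℚ) →
          (∑ i : ι, ω i K * ((p i).eval (-1) / (q i).eval (-1))) =
            pK.eval (-1) / qK.eval (-1)) := by
  constructor
  · constructor
    · -- forward direction of the iff
      rintro ⟨ι, _, ω, p, q, hconj, hq, hmain⟩ K
      refine ⟨∑ i : ι, Polynomial.C (ω i K) * (p i * ∏ j ∈ Finset.univ.erase i, q j),
        ∏ i : ι, q i, ?_, hmain K⟩
      rw [Polynomial.eval_prod]
      exact Finset.prod_ne_zero_iff.mpr fun i _ => hq i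
    · -- backward direction of the iff
      intro h
      choose pc qc hqc hec using h
      haveI : Fintype (Subgroup G) := Fintype.ofFinite _
      obtain ⟨N, ⟨e⟩⟩ : ∃ N, Nonempty (Fin N ≃ Subgroup G) :=
        ⟨_, ⟨(Fintype.equivFin (Subgroup G)).symm⟩⟩
      set cnt : Subgroup G → ℕ → ℕ := fun A => fixedChainCount D mapHom A with hcnt
      have hcntconj : ∀ (K : Subgroup G) (g : G), cnt (conjSub K g) = cnt K :=
        fun K g => funext fun n => fixedChainCount_conj mapHom hid hone hmul K g n
      refine ⟨Fin N, inferInstance,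
        fun i K => if cnt (e i) = cnt K then
          ((Finset.univ.filter (fun j : Fin N => cnt (e j) = cnt K)).card : ℚ)⁻¹ else 0,
        fun i => pc (e i), fun i => qc (e i), ?_, fun i => hqc (e i), ?_⟩
      · intro i K g
        simp only [hcntconj K g]
      · intro K
        beta_reduce
        set S := Finset.univ.filter (fun j : Fin N => cnt (e j) = cnt K) with hS
        have hKS : e.symm K ∈ S := by simp [hS]
        have hcard : ((S.card : ℚ)) ≠ 0 := by
          exact_mod_cast Finset.card_ne_zero_of_mem hKS
        have coe_sum : ∀ (F : Fin N → Polynomial ℚ),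
            ((∑ i : Fin N, F i : Polynomial ℚ) : PowerSeries ℚ) =
              ∑ i : Fin N, (F i : PowerSeries ℚ) := by
          intro F
          simpa only [Polynomial.coeToPowerSeries.ringHom_apply] using
            map_sum Polynomial.coeToPowerSeries.ringHom F Finset.univ
        rw [coe_sum]
        have hsplit : ∀ i : Fin N, i ∉ S →
            ((Polynomial.C (if cnt (e i) = cnt K then ((S.card : ℚ))⁻¹ else 0) *
              (pc (e i) * ∏ j ∈ Finset.univ.erase i, qc (e j)) : Polynomial ℚ) :
              PowerSeries ℚ) = 0 := by
          intro i hi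
          have : ¬ cnt (e i) = cnt K := by simpa [hS] using hi
          simp [this]
        have hterm : ∀ i ∈ S,
            ((Polynomial.C (if cnt (e i) = cnt K then ((S.card : ℚ))⁻¹ else 0) *
              (pc (e i) * ∏ j ∈ Finset.univ.erase i, qc (e j)) : Polynomial ℚ) :
              PowerSeries ℚ) =
            PowerSeries.C ((S.card : ℚ))⁻¹ *
              (PowerSeries.mk (fun n => (fixedChainCount D mapHom K n : ℚ)) *
                ((∏ i : Fin N, qc (e i) : Polynomial ℚ) : PowerSeries ℚ)) := by
          intro i hi
          have hiK : cnt (e i) = cnt K := by simpa [hS] using hi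
          have hfi : PowerSeries.mk (fun n => (fixedChainCount D mapHom (e i) n : ℚ)) =
              PowerSeries.mk (fun n => (fixedChainCount D mapHom K n : ℚ)) := by
            have hfn : (fun n => (fixedChainCount D mapHom (e i) n : ℚ)) =
                fun n => (fixedChainCount D mapHom K n : ℚ) := by
              funext n
              rw [show fixedChainCount D mapHom (e i) n = cnt (e i) n from rfl, hiK]
            rw [hfn]
          have hprod : (∏ j : Fin N, qc (e j)) =
              qc (e i) * ∏ j ∈ Finset.univ.erase i, qc (e j) :=
            (Finset.mul_prod_erase Finset.univ (fun j => qc (e j))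
              (Finset.mem_univ i)).symm
          rw [if_pos hiK, Polynomial.coe_mul, Polynomial.coe_C, Polynomial.coe_mul,
            hprod, Polynomial.coe_mul]
          rw [← hfi, ← hec (e i)]
          ring
        have hsum : (∑ i : Fin N,
            ((Polynomial.C (if cnt (e i) = cnt K then ((S.card : ℚ))⁻¹ else 0) *
              (pc (e i) * ∏ j ∈ Finset.univ.erase i, qc (e j)) : Polynomial ℚ) :
              PowerSeries ℚ)) =
            PowerSeries.mk (fun n => (fixedChainCount D mapHom K n : ℚ)) *
              ((∏ i : Fin N, qc (e i) : Polynomial ℚ) : PowerSeries ℚ) := by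
          rw [← Finset.sum_subset (Finset.subset_univ S) (fun i _ hi => hsplit i hi)]
          rw [Finset.sum_congr rfl hterm, Finset.sum_const, nsmul_eq_mul]
          rw [show ((S.card : ℕ) : PowerSeries ℚ) = PowerSeries.C (S.card : ℚ) by
            simp [map_natCast]]
          rw [← mul_assoc, ← map_mul, mul_inv_cancel₀ hcard, map_one, one_mul]
        rw [show (fun a b : Fin N => Classical.propDecidable (a = b)) =
          instDecidableEqFin N from Subsingleton.elim _ _]
        exact hsum.symm
  · -- the evaluation statement
    intro ι _ ω p q hconj hq hmain K pK qK hqK hK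
    have hps : ((∑ i : ι, Polynomial.C (ω i K) *
        (p i * ∏ j ∈ Finset.univ.erase i, q j)) * qK : Polynomial ℚ) =
        pK * ∏ i : ι, q i := by
      rw [← Polynomial.coe_inj, Polynomial.coe_mul, Polynomial.coe_mul,
        ← hmain K, ← hK]
      ring
    have heval := congrArg (Polynomial.eval (-1)) hps
    simp only [Polynomial.eval_mul, Polynomial.eval_finset_sum, Polynomial.eval_prod,
      Polynomial.eval_C] at heval
    exact eval_helper (fun i => ω i K) (fun i => (p i).eval (-1))
      (fun i => (q i).eval (-1)) hq (pK.eval (-1)) (qK.eval (-1)) hqK heval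
end
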